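/- arXiv:1003.4375 — 2 statements merged into one kernel-verified Lean document; each statement's English description precedes it below -/
import Mathlib

section
/- Suppose N = 0, i.e. every F_i has order 0. Then the implicit ideal ID of P(X,U) has dimension n − 1 if and only if the leading matrix S has rank n − 1. -/
open MvPolynomial

namespace DPPE

/-- Differential variables: `(Sum.inl i, k)` is the `k`-th derivative of `xᵢ`;
`(Sum.inr j, k)` is the `k`-th derivative of `uⱼ`. -/
abbrev Vr (n : ℕ) := (Fin n ⊕ Fin (n - 1)) × ℕ

/-- The differential polynomial ring `K{X ∪ U}`. -/
abbrev R (K : Type) [Field K] (n : ℕ) := MvPolynomial (Vr n) K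

variable {K : Type} [Field K] {n : ℕ}

/-- The order of `f` in the differential indeterminate `v` (equal to `-1` if absent). -/
noncomputable def ordIn {A : Type} [CommSemiring A] (f : MvPolynomial (Vr n) A)
    (v : Fin n ⊕ Fin (n - 1)) : ℤ :=
  ((f.vars.filter (fun w => w.1 = v)).image (fun w => (w.2 : ℤ))).max.unbotD (-1)

/-- The (total) order of the differential polynomial `f`. -/
noncomputable def ordTot {A : Type} [CommSemiring A] (f : MvPolynomial (Vr n) A) : ℕ :=
  (f.vars.image Prod.snd).max.unbotD 0

/-- `f` belongs to `K{X}`. -/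
def xOnly {A : Type} [CommSemiring A] (f : MvPolynomial (Vr n) A) : Prop :=
  ∀ w ∈ f.vars, (w.1).isLeft

/-- `f` belongs to `K{U}`. -/
def uOnly {A : Type} [CommSemiring A] (f : MvPolynomial (Vr n) A) : Prop :=
  ∀ w ∈ f.vars, (w.1).isRight

/-- `f` is a linear (degree at most 1) differential polynomial. -/
def IsLinearPoly {A : Type} [CommSemiring A] (f : MvPolynomial (Vr n) A) : Prop :=
  f.totalDegree ≤ 1

/-- The coefficient of the `k`-th derivative of the indeterminate `v` in `f`. -/
noncomputable def cf {A : Type} [CommSemiring A] (f : MvPolynomial (Vr n) A)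
    (v : Fin n ⊕ Fin (n - 1)) (k : ℕ) : A :=
  MvPolynomial.coeff (Finsupp.single (v, k) 1) f

/-- An order embedding realizing the ranking `R*` on `X ∪ U` that eliminates `U` with
respect to `X`, orderly on each block, with `x_n < ⋯ < x_1` and `u_1 < ⋯ < u_{n-1}`. -/
def rkk (w : Vr n) : Lex (Bool × Lex (ℕ × ℕ)) :=
  toLex (Sum.elim (fun i => (false, toLex (w.2, (i.rev : ℕ))))
    (fun j => (true, toLex (w.2, (j : ℕ)))) w.1)

/-- `v` is the lead (highest ranked derivative w.r.t. `R*`) of `g`. -/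
def IsLead {A : Type} [CommSemiring A] (g : MvPolynomial (Vr n) A) (v : Vr n) : Prop :=
  v ∈ g.vars ∧ ∀ w ∈ g.vars, rkk w ≤ rkk v

/-- A system `𝒫(X,U)` of `n` linear differential polynomial parametric equations
`xᵢ = Pᵢ(U) = aᵢ - Hᵢ(U)` in `n-1` differential parameters, over an ordinary
differential field `(K, der)`;  `D` is the induced derivation on `K{X ∪ U}`.
`Fᵢ = xᵢ - aᵢ + Hᵢ(U)`. -/
structure Sys (K : Type) [Field K] (n : ℕ) where
  hn : 2 ≤ n
  der : Derivation ℤ K K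
  D : Derivation ℤ (R K n) (R K n)
  hD_C : ∀ c : K, D (C c) = C (der c)
  hD_X : ∀ (v : Fin n ⊕ Fin (n - 1)) (k : ℕ), D (X (v, k)) = X (v, k + 1)
  a : Fin n → K
  H : Fin n → R K n
  H_hom : ∀ i, (H i).IsHomogeneous 1
  H_u : ∀ i, uOnly (H i)
  H_ne : ∃ i, H i ≠ 0
  param : ∀ j : Fin (n - 1), ∃ i, 0 ≤ ordIn (H i) (Sum.inr j)

namespace Sys

/-- `Fᵢ = xᵢ - aᵢ + Hᵢ(U)`. -/
noncomputable def F (S : Sys K n) (i : Fin n) : R K n :=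
  X (Sum.inl i, 0) - C (S.a i) + S.H i

/-- `oᵢ = ord(Fᵢ)`. -/
noncomputable def o (S : Sys K n) (i : Fin n) : ℕ := ordTot (S.F i)

/-- `γⱼ = min_i (oᵢ - ord(Fᵢ, uⱼ))`. -/
noncomputable def gamZ (S : Sys K n) (j : Fin (n - 1)) : ℤ :=
  (Finset.univ : Finset (Fin n)).inf' ⟨⟨0, by have h := S.hn; omega⟩, Finset.mem_univ _⟩
    fun i => (S.o i : ℤ) - ordIn (S.F i) (Sum.inr j)

noncomputable def gam (S : Sys K n) (j : Fin (n - 1)) : ℕ := (S.gamZ j).toNat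

/-- `N = ∑ oᵢ`. -/
noncomputable def Nn (S : Sys K n) : ℕ := ∑ i, S.o i

/-- The completeness index `γ = ∑ γⱼ`. -/
noncomputable def gamT (S : Sys K n) : ℕ := ∑ j, S.gam j

/-- `L = ∑ (N - oᵢ - γ + 1)`. -/
noncomputable def L (S : Sys K n) : ℕ := ∑ i, (S.Nn - S.o i - S.gamT + 1)

/-- `Lʰ = ∑ (N - oᵢ - γ)`. -/
noncomputable def Lh (S : Sys K n) : ℕ := ∑ i, (S.Nn - S.o i - S.gamT)

/-- The set `PS = {∂^k Fᵢ ∣ 0 ≤ k ≤ N - oᵢ - γ}`. -/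
def PSset (S : Sys K n) : Set (R K n) :=
  {g | ∃ i k, k ≤ S.Nn - S.o i - S.gamT ∧ g = (⇑S.D)^[k] (S.F i)}

/-- `f` belongs to the polynomial subring `K[𝒳][𝒱]`. -/
def inXV (S : Sys K n) {A : Type} [CommSemiring A] (f : MvPolynomial (Vr n) A) : Prop :=
  ∀ w ∈ f.vars,
    Sum.elim (fun i => w.2 ≤ S.Nn - S.o i - S.gamT)
      (fun j => w.2 ≤ S.Nn - S.gam j - S.gamT) w.1

/-- Membership in the ideal `(PS)` generated by `PS` in `K[𝒳][𝒱]`. -/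
def PSIdealMem (S : Sys K n) (f : R K n) : Prop :=
  f ∈ Ideal.span S.PSset ∧ S.inXV f

/-- Substitution `x_{ik} ↦ ∂^k(Pᵢ(U))` defining the implicit ideal. -/
noncomputable def subst (S : Sys K n) : R K n →ₐ[K] R K n :=
  aeval fun w =>
    Sum.elim (fun i => (⇑S.D)^[w.2] (C (S.a i) - S.H i)) (fun j => X (Sum.inr j, w.2)) w.1

/-- Membership in the implicit ideal `ID = {f ∈ K{X} ∣ f(P₁(U),…,Pₙ(U)) = 0}`. -/
def memID (S : Sys K n) (f : R K n) : Prop := xOnly f ∧ S.subst f = 0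

/-- Membership in the differential ideal `[A]` of `K{X}` generated by `A ∈ K{X}`. -/
def memDiffSpanX (S : Sys K n) (A f : R K n) : Prop :=
  xOnly f ∧ f ∈ Ideal.span {g | ∃ k, g = (⇑S.D)^[k] A}

/-- `dim ID = n - 1`: the implicit ideal has a characteristic set `{A}` with `A`
a nonzero linear differential polynomial, i.e. `ID = [A]`. -/
def DimFull (S : Sys K n) : Prop :=
  ∃ A : R K n, A ≠ 0 ∧ IsLinearPoly A ∧ xOnly A ∧ ∀ f, (S.memID f ↔ S.memDiffSpanX A f)

/-- The action of a linear differential operator `Lop = ∑ cₖ ∂^k ∈ K[∂]` on `f`. -/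
noncomputable def applyOp (S : Sys K n) (Lop : Polynomial K) (f : R K n) : R K n :=
  ∑ k ∈ Lop.support, C (Lop.coeff k) * (⇑S.D)^[k] f

/-- `Lop` is a left divisor of `Fop` in `K[∂]`. -/
def leftDvd (S : Sys K n) (Lop Fop : Polynomial K) : Prop :=
  ∃ Mop : Polynomial K, ∀ f : R K n, S.applyOp Fop f = S.applyOp Lop (S.applyOp Mop f)

/-- For `B ∈ ID` linear, written `B = ∑ 𝓕ᵢ(xᵢ - aᵢ)`: the operator `𝓕ᵢ ∈ K[∂]`. -/
noncomputable def opOf (S : Sys K n) (B : R K n) (i : Fin n) : Polynomial K :=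
  ∑ k ∈ Finset.range (ordTot B + 1), Polynomial.monomial k (cf B (Sum.inl i) k)

/-- `B` is `ID`-primitive: the greatest common left divisor of `𝓕₁,…,𝓕ₙ` lies in `K`. -/
def IDPrimitive (S : Sys K n) (B : R K n) : Prop :=
  ∀ Lop : Polynomial K, (∀ i, S.leftDvd Lop (S.opOf B i)) → Lop.natDegree = 0

/-- `B'` is an `ID`-primitive part of `B`:  `𝓕ᵢ = IDcont(B)·𝓛ᵢ` with `𝓛₁,…,𝓛ₙ`
coprime and `B' = ∑ 𝓛ᵢ(xᵢ - aᵢ)`. -/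
def IsIDPrimPart (S : Sys K n) (B B' : R K n) : Prop :=
  ∃ (Lop : Polynomial K) (Lfam : Fin n → Polynomial K),
    (∀ i f, S.applyOp (S.opOf B i) f = S.applyOp Lop (S.applyOp (Lfam i) f)) ∧
    (∀ Q : Polynomial K, (∀ i, S.leftDvd Q (Lfam i)) → Q.natDegree = 0) ∧
    B' = ∑ i, S.applyOp (Lfam i) (X (Sum.inl i, 0) - C (S.a i))

/-- The co-order of `B` in `(PS)`: the greatest `c` with `∂^c B ∈ (PS)`. -/
noncomputable def coOrd (S : Sys K n) (B : R K n) : ℕ :=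
  sSup {c : ℕ | S.PSIdealMem ((⇑S.D)^[c] B)}

/-- The leading coefficients vector `l(B) = (α₁,…,αₙ)`, `αᵢ` the coefficient of
`∂^{N - oᵢ - γ - c(B)}` in `𝓕ᵢ`. -/
noncomputable def lvec (S : Sys K n) (B : R K n) : Fin n → K :=
  fun i => cf B (Sum.inl i) (S.Nn - S.o i - S.gamT - S.coOrd B)

/-- The leading matrix `S` of the system: entry `(i,j)` is the coefficient of
`u_{n-j, oᵢ - γ_{n-j}}` in `Fᵢ`. -/
noncomputable def Smat (S : Sys K n) : Matrix (Fin n) (Fin (n - 1)) K :=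
  Matrix.of fun i j =>
    if S.gam j.rev ≤ S.o i then cf (S.F i) (Sum.inr j.rev) (S.o i - S.gam j.rev) else 0

/-- Row indices of the complete differential resultant matrix `M(L)`. -/
abbrev RI (S : Sys K n) := (i : Fin n) × Fin (S.Nn - S.o i - S.gamT + 1)

/-- Column indices corresponding to the variables `𝒱`. -/
abbrev CI (S : Sys K n) := (j : Fin (n - 1)) × Fin (S.Nn - S.gam j - S.gamT + 1)

/-- The principal matrix `M_{L-1}` of the system. -/
noncomputable def Mprin (S : Sys K n) : Matrix S.RI S.CI K :=
  Matrix.of fun ik jm => cf ((⇑S.D)^[(ik.2 : ℕ)] (S.F ik.1)) (Sum.inr jm.1) (jm.2 : ℕ)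

/-- The complete differential resultant matrix `M(L)` (last column holds the parts
`x_{ik} - ∂^k aᵢ`). -/
noncomputable def Mfull (S : Sys K n) : Matrix S.RI (S.CI ⊕ Unit) (R K n) :=
  Matrix.of fun ik c =>
    Sum.elim
      (fun jm => (C (cf ((⇑S.D)^[(ik.2 : ℕ)] (S.F ik.1)) (Sum.inr jm.1) (jm.2 : ℕ)) : R K n))
      (fun _ => X (Sum.inl ik.1, (ik.2 : ℕ)) - C ((⇑S.der)^[(ik.2 : ℕ)] (S.a ik.1))) c

/-- The linear complete differential resultant `∂CRes(F₁,…,Fₙ) = det M(L)`. -/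
noncomputable def dCRes (S : Sys K n) : R K n :=
  if h : Fintype.card (S.CI ⊕ Unit) = Fintype.card S.RI then
    (S.Mfull.submatrix (Fintype.equivOfCardEq h) id).det
  else 0

/-- `G` is the (reduced) Groebner basis associated to the system `𝒫(X,U)`,
w.r.t. the lex monomial order induced by the ranking `R*`. -/
def IsAssocGB (S : Sys K n) (G : Finset (R K n)) : Prop :=
  (∀ g ∈ G, g ≠ 0 ∧ IsLinearPoly g ∧ S.inXV g ∧ g ∈ Ideal.span S.PSset) ∧
  Ideal.span (G : Set (R K n)) = Ideal.span S.PSset ∧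
  (∀ g ∈ G, ∃ v : Vr n, IsLead g v ∧ cf g v.1 v.2 = 1 ∧ ∀ g' ∈ G, g' ≠ g → v ∉ g'.vars) ∧
  (∀ f : R K n, f ∈ Ideal.span S.PSset → S.inXV f → IsLinearPoly f → f ≠ 0 →
    ∃ g ∈ G, ∃ v : Vr n, IsLead g v ∧ IsLead f v)

end Sys

/-- `G₀ = G ∩ K{X}`. -/
noncomputable def G0 (G : Finset (R K n)) : Finset (R K n) :=
  @Finset.filter _ (fun g => xOnly g) (Classical.decPred _) G
namespace Aux

lemma fdeg_add (a b : Vr n →₀ ℕ) : (a + b).degree = a.degree + b.degree := by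
  simp [Finsupp.degree_eq_weight_one, map_add]

lemma single_ne_zero' (v : Vr n) : (Finsupp.single v 1 : Vr n →₀ ℕ) ≠ 0 := by
  simp [Finsupp.single_eq_zero]

lemma single_inj {v w : Vr n} (h : (Finsupp.single v 1 : Vr n →₀ ℕ) = Finsupp.single w 1) :
    v = w := Finsupp.single_left_injective one_ne_zero h

lemma degree_single (v : Vr n) : (Finsupp.single v 1 : Vr n →₀ ℕ).degree = 1 := by
  exact Finsupp.degree_single v 1

/-- monomials of a polynomial of total degree ≤ 1 -/
lemma support_linear {p : R K n} (hp : p.totalDegree ≤ 1) {d : Vr n →₀ ℕ}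
    (hd : d ∈ p.support) : d = 0 ∨ ∃ v, d = Finsupp.single v 1 := by
  have hdeg : d.degree ≤ 1 := by
    have := MvPolynomial.le_totalDegree hd
    exact le_trans (le_of_eq rfl) (this.trans hp)
  rcases Nat.le_one_iff_eq_zero_or_eq_one.mp hdeg with h0 | h1
  · exact Or.inl ((Finsupp.degree_eq_zero_iff d).mp h0)
  · right
    have hne : d ≠ 0 := by
      intro h; rw [h] at h1; simp [Finsupp.degree] at h1
    obtain ⟨v, hv⟩ := Finsupp.ne_iff.mp hne
    have hvs : v ∈ d.support := by
      simp only [Finsupp.mem_support_iff]; simpa using hv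
    refine ⟨v, ?_⟩
    have hdv1 : d v = 1 := by
      have h1' : d v ≤ 1 := h1 ▸ Finsupp.le_degree v d
      have : 1 ≤ d v := Nat.one_le_iff_ne_zero.mpr (by simpa using hv)
      omega
    ext w
    by_cases hw : w = v
    · subst hw; simp [hdv1]
    · simp only [Finsupp.single_apply]
      rw [if_neg (fun h => hw h.symm)]
      by_contra hdw
      have hws : w ∈ d.support := by simp [Finsupp.mem_support_iff, hdw]
      have h2 : 2 ≤ d.degree := by
        have hsub : ({v, w} : Finset (Vr n)) ⊆ d.support := by
          intro x hx; simp at hx; rcases hx with rfl | rfl <;> assumption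
        calc 2 = d v + 1 := by omega
        _ ≤ d v + d w := by
            have : 1 ≤ d w := Nat.one_le_iff_ne_zero.mpr (by simpa using hdw)
            omega
        _ = ∑ x ∈ ({v, w} : Finset (Vr n)), d x := by
            rw [Finset.sum_pair (fun h => hw h.symm)]
        _ ≤ d.degree := Finset.sum_le_sum_of_subset hsub
      omega

lemma coeff_single_ne_zero_of_mem_vars {p : R K n} (hp : p.totalDegree ≤ 1) {v : Vr n}
    (hv : v ∈ p.vars) : MvPolynomial.coeff (Finsupp.single v 1) p ≠ 0 := by
  obtain ⟨d, hd, hvd⟩ := (MvPolynomial.mem_vars v).mp hv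
  rcases support_linear hp hd with rfl | ⟨w, rfl⟩
  · simp at hvd
  · have : v = w := by
      have := Finsupp.support_single_ne_zero w (one_ne_zero (α := ℕ))
      rw [this] at hvd; simpa using hvd
    subst this
    exact MvPolynomial.mem_support_iff.mp hd

lemma mem_vars_of_coeff_single {p : R K n} {v : Vr n}
    (h : MvPolynomial.coeff (Finsupp.single v 1) p ≠ 0) : v ∈ p.vars := by
  refine (MvPolynomial.mem_vars v).mpr ⟨Finsupp.single v 1, MvPolynomial.mem_support_iff.mpr h, ?_⟩
  rw [Finsupp.support_single_ne_zero v one_ne_zero]; simp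

/-- representation of a linear polynomial -/
lemma rep_linear (p : R K n) (hp : p.totalDegree ≤ 1) :
    p = C (MvPolynomial.coeff 0 p) +
      ∑ v ∈ p.vars, C (MvPolynomial.coeff (Finsupp.single v 1) p) * X v := by
  apply MvPolynomial.ext
  intro d
  classical
  rw [MvPolynomial.coeff_add, MvPolynomial.coeff_C, MvPolynomial.coeff_sum]
  simp only [MvPolynomial.coeff_C_mul, MvPolynomial.coeff_X']
  by_cases hd : d = 0
  · subst hd
    have : ∀ v ∈ p.vars, MvPolynomial.coeff (Finsupp.single v 1) p *
        (if (Finsupp.single v 1 : Vr n →₀ ℕ) = 0 then (1:K) else 0) = 0 := by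
      intro v _; rw [if_neg (single_ne_zero' v), mul_zero]
    rw [Finset.sum_congr rfl this]
    simp
  · rw [if_neg (fun h => hd h.symm), zero_add]
    by_cases hds : d ∈ p.support
    · rcases support_linear hp hds with rfl | ⟨w, rfl⟩
      · exact absurd rfl hd
      · have hwv : w ∈ p.vars := mem_vars_of_coeff_single (MvPolynomial.mem_support_iff.mp hds)
        rw [Finset.sum_eq_single w]
        · simp
        · intro v hv hvw
          rw [if_neg (fun h => hvw (single_inj h)), mul_zero]
        · intro h; exact absurd hwv h
    · have hd0 : MvPolynomial.coeff d p = 0 := by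
        simpa using MvPolynomial.notMem_support_iff.mp hds
      rw [hd0]
      symm
      apply Finset.sum_eq_zero
      intro v _
      by_cases h : (Finsupp.single v 1 : Vr n →₀ ℕ) = d
      · rw [h, hd0, zero_mul]
      · rw [if_neg h, mul_zero]

end Aux
namespace Aux

variable {K : Type} [Field K] {n : ℕ}

lemma cf_def (f : R K n) (v : Fin n ⊕ Fin (n-1)) (k : ℕ) :
    cf f v k = MvPolynomial.coeff (Finsupp.single (v,k) 1) f := rfl

lemma cf_X (w : Vr n) (v : Fin n ⊕ Fin (n-1)) (k : ℕ) :
    cf (X w : R K n) v k = if w = (v, k) then 1 else 0 := by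
  classical
  rw [cf_def, MvPolynomial.coeff_X']
  by_cases h : w = (v,k)
  · subst h; simp
  · rw [if_neg (fun hc => h (single_inj hc)), if_neg h]

lemma cf_C (c : K) (v : Fin n ⊕ Fin (n-1)) (k : ℕ) : cf (C c : R K n) v k = 0 := by
  rw [cf_def, MvPolynomial.coeff_C, if_neg (fun h => single_ne_zero' _ h.symm)]

lemma cf_CmulX (c : K) (w : Vr n) (v : Fin n ⊕ Fin (n-1)) (k : ℕ) :
    cf (C c * X w : R K n) v k = if w = (v,k) then c else 0 := by
  rw [cf_def, MvPolynomial.coeff_C_mul, ← cf_def, cf_X]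
  by_cases h : w = (v,k) <;> simp [h]

lemma cf_add (f g : R K n) (v k) : cf (f + g) v k = cf f v k + cf g v k :=
  MvPolynomial.coeff_add _ _ _

lemma cf_sub (f g : R K n) (v k) : cf (f - g) v k = cf f v k - cf g v k :=
  MvPolynomial.coeff_sub _ _ _ _

lemma cf_smul (c : K) (f : R K n) (v k) : cf (c • f) v k = c * cf f v k := by
  rw [cf_def, MvPolynomial.coeff_smul, smul_eq_mul, cf_def]

lemma cf_sum {ι : Type*} (s : Finset ι) (f : ι → R K n) (v k) :
    cf (∑ i ∈ s, f i) v k = ∑ i ∈ s, cf (f i) v k := by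
  simp only [cf_def, MvPolynomial.coeff_sum]

lemma cf_zero (v : Fin n ⊕ Fin (n-1)) (k : ℕ) : cf (0 : R K n) v k = 0 := by
  rw [cf_def]; exact MvPolynomial.coeff_zero _

lemma cf_eq_zero_of_not_mem_vars {p : R K n} {w : Vr n} (h : w ∉ p.vars) :
    MvPolynomial.coeff (Finsupp.single w 1) p = 0 := by
  by_contra hc; exact h (mem_vars_of_coeff_single hc)

lemma sum_reindex {ι : Type} [Fintype ι] [DecidableEq ι] (p : R K n) (t : Finset (Vr n))
    (e : ι → Vr n) (he : Function.Injective e)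
    (hsub : ∀ v ∈ t, ∃ z, v = e z)
    (hz : ∀ z, e z ∉ t → MvPolynomial.coeff (Finsupp.single (e z) 1) p = 0) :
    ∑ v ∈ t, C (MvPolynomial.coeff (Finsupp.single v 1) p) * X v
      = ∑ z : ι, C (MvPolynomial.coeff (Finsupp.single (e z) 1) p) * X (e z) := by
  classical
  have himg : t ⊆ Finset.univ.image e := by
    intro v hv; obtain ⟨z, rfl⟩ := hsub v hv
    exact Finset.mem_image_of_mem e (Finset.mem_univ z)
  rw [Finset.sum_subset himg, Finset.sum_image (fun a _ b _ h => he h)]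
  intro v hv hvt
  obtain ⟨z, _, rfl⟩ := Finset.mem_image.mp hv
  rw [hz z hvt, map_zero, zero_mul]

section WithS

variable (S : Sys K n)

lemma D_smul (c : K) (f : R K n) : S.D (c • f) = (S.der c) • f + c • S.D f := by
  rw [MvPolynomial.smul_eq_C_mul, Derivation.leibniz, smul_eq_mul, smul_eq_mul, S.hD_C,
    MvPolynomial.smul_eq_C_mul, MvPolynomial.smul_eq_C_mul]
  ring

lemma D_CmulX (c : K) (w : Vr n) :
    S.D (C c * X w) = C (S.der c) * X w + C c * X (w.1, w.2 + 1) := by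
  rw [Derivation.leibniz, smul_eq_mul, smul_eq_mul, S.hD_C]
  have : S.D (X w) = X (w.1, w.2 + 1) := S.hD_X w.1 w.2
  rw [this]; ring

/-- span of `X`-variables of the form `(e z, m)` with `m < u` -/
noncomputable def BltX {ι : Type} (e : ι → Fin n ⊕ Fin (n-1)) (u : ℕ) : Submodule K (R K n) :=
  Submodule.span K {f | ∃ z m, m < u ∧ f = X (e z, m)}

lemma BltX_mono {ι : Type} (e : ι → Fin n ⊕ Fin (n-1)) {u u' : ℕ} (h : u ≤ u') :
    (BltX (K := K) (n := n) e u) ≤ BltX e u' :=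
  Submodule.span_mono (fun f ⟨z, m, hm, hf⟩ => ⟨z, m, lt_of_lt_of_le hm h, hf⟩)

lemma D_mem_BltX {ι : Type} {e : ι → Fin n ⊕ Fin (n-1)} {u : ℕ} {f : R K n}
    (hf : f ∈ BltX (K := K) e u) : S.D f ∈ BltX e (u + 1) := by
  induction hf using Submodule.span_induction with
  | mem x h =>
    obtain ⟨z, m, hm, rfl⟩ := h
    rw [S.hD_X]
    exact Submodule.subset_span ⟨z, m+1, by omega, rfl⟩
  | zero => rw [map_zero]; exact Submodule.zero_mem _
  | add x y hx hy ihx ihy => rw [map_add]; exact Submodule.add_mem _ ihx ihy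
  | smul c x hx ih =>
    rw [D_smul]
    exact Submodule.add_mem _
      (Submodule.smul_mem _ _ (BltX_mono e (by omega) hx)) (Submodule.smul_mem _ _ ih)

lemma mem_BltX_gen {ι : Type} (e : ι → Fin n ⊕ Fin (n-1)) {m u : ℕ} (z : ι) (h : m < u) :
    (X (e z, m) : R K n) ∈ BltX e u := Submodule.subset_span ⟨z, m, h, rfl⟩

lemma cf_BltX {ι : Type} {e : ι → Fin n ⊕ Fin (n-1)} {u : ℕ} {f : R K n}
    (hf : f ∈ BltX (K := K) e u) (v : Fin n ⊕ Fin (n-1)) (k : ℕ) (hk : u ≤ k) :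
    cf f v k = 0 := by
  induction hf using Submodule.span_induction with
  | mem x h =>
    obtain ⟨z, m, hm, rfl⟩ := h
    rw [cf_X, if_neg]
    intro hc
    have : m = k := congrArg Prod.snd hc
    omega
  | zero => exact cf_zero v k
  | add x y hx hy ihx ihy => rw [cf_add, ihx, ihy, add_zero]
  | smul c x hx ih => rw [cf_smul, ih, mul_zero]

lemma BltX_le_spanX {ι : Type} (e : ι → Fin n ⊕ Fin (n-1)) (u : ℕ) :
    (BltX (K := K) (n := n) e u) ≤ Submodule.span K (Set.range (X : Vr n → R K n)) :=
  Submodule.span_le.mpr (fun f ⟨z, m, _, hf⟩ => Submodule.subset_span ⟨(e z, m), hf.symm⟩)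

/-- `ξᵢᵐ = xᵢᵐ - ∂ᵐ aᵢ` -/
noncomputable def xi (i : Fin n) (m : ℕ) : R K n :=
  X (Sum.inl i, m) - C ((⇑S.der)^[m] (S.a i))

lemma D_xi (i : Fin n) (m : ℕ) : S.D (xi S i m) = xi S i (m + 1) := by
  rw [xi, map_sub, S.hD_X, S.hD_C, xi, Function.iterate_succ_apply']

noncomputable def Bxi (i₀ : Fin n) (u : ℕ) : Submodule K (R K n) :=
  Submodule.span K {f | ∃ i, i ≠ i₀ ∧ ∃ m, m < u ∧ f = xi S i m}

lemma Bxi_mono (i₀ : Fin n) {u u' : ℕ} (h : u ≤ u') : Bxi S i₀ u ≤ Bxi S i₀ u' :=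
  Submodule.span_mono (fun f ⟨i, hi, m, hm, hf⟩ => ⟨i, hi, m, lt_of_lt_of_le hm h, hf⟩)

lemma D_mem_Bxi {i₀ : Fin n} {u : ℕ} {f : R K n} (hf : f ∈ Bxi S i₀ u) :
    S.D f ∈ Bxi S i₀ (u + 1) := by
  induction hf using Submodule.span_induction with
  | mem x h =>
    obtain ⟨i, hi, m, hm, rfl⟩ := h
    rw [D_xi]
    exact Submodule.subset_span ⟨i, hi, m+1, by omega, rfl⟩
  | zero => rw [map_zero]; exact Submodule.zero_mem _
  | add x y hx hy ihx ihy => rw [map_add]; exact Submodule.add_mem _ ihx ihy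
  | smul c x hx ih =>
    rw [D_smul]
    exact Submodule.add_mem _
      (Submodule.smul_mem _ _ (Bxi_mono S i₀ (by omega) hx)) (Submodule.smul_mem _ _ ih)

/-- iterated derivative of a linear combination keeps its "leading part" -/
lemma iterD {ι : Type} (b : ι → ℕ → R K n)
    (hb : ∀ i m, S.D (b i m) = b i (m+1)) (Bm : ℕ → Submodule K (R K n))
    (hmono : ∀ {u u'}, u ≤ u' → Bm u ≤ Bm u')
    (hgen : ∀ (i : ι) (m u : ℕ), m < u → b i m ∈ Bm u)
    (hD : ∀ {u : ℕ} {f : R K n}, f ∈ Bm u → S.D f ∈ Bm (u+1))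
    (c : ι → K) (t : Finset ι) (m0 : ℕ) {f w0 : R K n} (hw0 : w0 ∈ Bm m0)
    (hf : f = (∑ i ∈ t, C (c i) * b i m0) + w0) (k : ℕ) :
    ∃ w ∈ Bm (m0 + k), (⇑S.D)^[k] f = (∑ i ∈ t, C (c i) * b i (m0 + k)) + w := by
  induction k with
  | zero => exact ⟨w0, hw0, by simpa using hf⟩
  | succ k ih =>
    obtain ⟨w, hw, hw2⟩ := ih
    refine ⟨(∑ i ∈ t, C (S.der (c i)) * b i (m0 + k)) + S.D w, ?_, ?_⟩
    · refine Submodule.add_mem _ (Submodule.sum_mem _ fun i _ => ?_) ?_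
      · rw [← MvPolynomial.smul_eq_C_mul]
        exact Submodule.smul_mem _ _ (hgen i _ _ (by omega))
      · have := hD hw
        have h2 : m0 + k + 1 = m0 + (k+1) := by omega
        rwa [h2] at this
    · rw [Function.iterate_succ_apply', hw2, map_add, map_sum]
      have hterm : ∀ i ∈ t, S.D (C (c i) * b i (m0 + k))
          = C (c i) * b i (m0 + (k+1)) + C (S.der (c i)) * b i (m0 + k) := by
        intro i _
        rw [Derivation.leibniz, smul_eq_mul, smul_eq_mul, S.hD_C, hb]
        have : m0 + k + 1 = m0 + (k+1) := by omega
        rw [this]; ring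
      rw [Finset.sum_congr rfl hterm, Finset.sum_add_distrib]
      ring

end WithS
end Aux
namespace Aux

variable {K : Type} [Field K] {n : ℕ}

/-- coefficient matrix of the system -/
noncomputable def Mc (S : Sys K n) : Matrix (Fin n) (Fin (n-1)) K :=
  Matrix.of fun i j => cf (S.F i) (Sum.inr j) 0

section Struct

variable (S : Sys K n) (hN : S.Nn = 0)
include hN

lemma ho : ∀ i, S.o i = 0 := by
  intro i
  exact (Finset.sum_eq_zero_iff.mp hN) i (Finset.mem_univ i)

lemma hFvars : ∀ i, ∀ w ∈ (S.F i).vars, w.2 = 0 := by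
  intro i w hw
  have h0 : S.o i = 0 := ho S hN i
  rw [Sys.o, ordTot] at h0
  have hw2 : (w.2 : WithBot ℕ) ≤ ((S.F i).vars.image Prod.snd).max :=
    Finset.le_max (Finset.mem_image_of_mem _ hw)
  cases hmax : ((S.F i).vars.image Prod.snd).max with
  | bot => rw [hmax] at hw2; simp at hw2
  | coe m =>
    rw [hmax] at hw2 h0
    simp only [WithBot.unbotD_coe] at h0
    subst h0
    exact Nat.le_zero.mp (WithBot.coe_le_coe.mp hw2)

omit hN in
lemma cfF_eq_cfH (i : Fin n) (j : Fin (n-1)) (k : ℕ) :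
    cf (S.F i) (Sum.inr j) k = cf (S.H i) (Sum.inr j) k := by
  rw [Sys.F, cf_add, cf_sub, cf_X, cf_C, if_neg (by simp)]
  ring

omit hN in
lemma hHdeg (i : Fin n) : (S.H i).totalDegree ≤ 1 := by
  by_cases h : S.H i = 0
  · rw [h]; simp
  · exact le_of_eq ((S.H_hom i).totalDegree h)

lemma hHvars0 (i : Fin n) : ∀ w ∈ (S.H i).vars, ∃ j, w = (Sum.inr j, 0) := by
  intro w hw
  obtain ⟨j, hj⟩ := Sum.isRight_iff.mp (S.H_u i w hw)
  have hne : MvPolynomial.coeff (Finsupp.single w 1) (S.H i) ≠ 0 :=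
    coeff_single_ne_zero_of_mem_vars (hHdeg S i) hw
  have hw' : w = (Sum.inr j, w.2) := by rw [← hj]
  have hne2 : cf (S.F i) (Sum.inr j) w.2 ≠ 0 := by
    rw [cfF_eq_cfH, cf_def, ← hw']; exact hne
  have hmem : (Sum.inr j, w.2) ∈ (S.F i).vars := mem_vars_of_coeff_single hne2
  have := hFvars S hN i _ hmem
  simp only at this
  exact ⟨j, by rw [hw', this]⟩

lemma cfH_zero (i : Fin n) : MvPolynomial.coeff 0 (S.H i) = 0 := by
  apply (S.H_hom i).coeff_eq_zero
  simp [map_zero]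

lemma HL1 (i : Fin n) : S.H i = ∑ j, C (Mc S i j) * X ((Sum.inr j, 0) : Vr n) := by
  have hrep := rep_linear (S.H i) (hHdeg S i)
  rw [cfH_zero S hN i, map_zero, zero_add] at hrep
  rw [hrep]
  have he : Function.Injective (fun j : Fin (n-1) => ((Sum.inr j, 0) : Vr n)) := by
    intro a b h
    simpa using congrArg Prod.fst h
  rw [sum_reindex (S.H i) _ _ he]
  · apply Finset.sum_congr rfl
    intro j _
    congr 1
    rw [Mc]
    simp only [Matrix.of_apply]
    rw [cfF_eq_cfH, cf_def]
  · exact fun v hv => by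
      obtain ⟨j, rfl⟩ := hHvars0 S hN i v hv; exact ⟨j, rfl⟩
  · intro z hz
    exact cf_eq_zero_of_not_mem_vars hz

lemma gam_zero (j : Fin (n-1)) : S.gam j = 0 := by
  have hle : ∀ i, ordIn (S.F i) (Sum.inr j) ≤ 0 := by
    intro i
    rw [ordIn]
    cases hmax : (((S.F i).vars.filter (fun w => w.1 = Sum.inr j)).image
        (fun w => (w.2 : ℤ))).max with
    | bot => simp
    | coe m =>
      simp only [WithBot.unbotD_coe]
      have hm := Finset.mem_of_max hmax
      obtain ⟨w, hw, hw2⟩ := Finset.mem_image.mp hm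
      have := hFvars S hN i w (Finset.mem_filter.mp hw).1
      rw [← hw2, this]
      simp
  obtain ⟨i, hi⟩ := S.param j
  have hvH : (Sum.inr j, 0) ∈ (S.H i).vars := by
    rw [ordIn] at hi
    cases hmax : (((S.H i).vars.filter (fun w => w.1 = Sum.inr j)).image
        (fun w => (w.2 : ℤ))).max with
    | bot =>
      rw [hmax] at hi; simp at hi
    | coe m =>
      obtain ⟨w, hw, _⟩ := Finset.mem_image.mp (Finset.mem_of_max hmax)
      have hw' := Finset.mem_filter.mp hw
      obtain ⟨j', hj'⟩ := hHvars0 S hN i w hw'.1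
      have : j' = j := by
        have := hw'.2
        rw [hj'] at this
        simpa using this
      rw [← this, ← hj']
      exact hw'.1
  have hcf : cf (S.F i) (Sum.inr j) 0 ≠ 0 := by
    rw [cfF_eq_cfH, cf_def]
    exact coeff_single_ne_zero_of_mem_vars (hHdeg S i) hvH
  have hvF : (Sum.inr j, 0) ∈ (S.F i).vars := by
    have := mem_vars_of_coeff_single (p := S.F i) (v := (Sum.inr j, 0))
    exact this hcf
  have hordF : ordIn (S.F i) (Sum.inr j) = 0 := by
    refine le_antisymm (hle i) ?_
    rw [ordIn]
    have hmem : (0 : ℤ) ∈ ((S.F i).vars.filter (fun w => w.1 = Sum.inr j)).image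
        (fun w => (w.2 : ℤ)) := by
      refine Finset.mem_image.mpr ⟨(Sum.inr j, 0), ?_, rfl⟩
      exact Finset.mem_filter.mpr ⟨hvF, rfl⟩
    have hle0 := Finset.le_max hmem
    cases hmax : (((S.F i).vars.filter (fun w => w.1 = Sum.inr j)).image
        (fun w => (w.2 : ℤ))).max with
    | bot => rw [hmax] at hle0; simp at hle0
    | coe m =>
      rw [hmax] at hle0
      simp only [WithBot.unbotD_coe]
      exact WithBot.coe_le_coe.mp hle0
  have hgamZ : S.gamZ j = 0 := by
    rw [Sys.gamZ]
    apply le_antisymm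
    · have h1 : (Finset.univ.inf' ⟨⟨0, by have h := S.hn; omega⟩, Finset.mem_univ _⟩
          fun i' => ((S.o i' : ℤ) - ordIn (S.F i') (Sum.inr j)))
          ≤ (S.o i : ℤ) - ordIn (S.F i) (Sum.inr j) := Finset.inf'_le _ (Finset.mem_univ i)
      rw [ho S hN i, hordF] at h1
      simpa using h1
    · apply Finset.le_inf'
      intro i' _
      rw [ho S hN i']
      have := hle i'
      omega
  rw [Sys.gam, hgamZ]
  rfl

lemma Smat_eq : S.Smat = Matrix.of fun i j => Mc S i (Fin.rev j) := by
  ext i j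
  rw [Sys.Smat]
  simp only [Matrix.of_apply]
  rw [gam_zero S hN, ho S hN, if_pos (le_refl 0)]
  rfl

end Struct

lemma rank_submatrix_col {m l : ℕ} (A : Matrix (Fin m) (Fin l) K) (e : Equiv.Perm (Fin l)) :
    (A.submatrix id ⇑e).rank = A.rank := by
  have hrange : LinearMap.range (A.submatrix id ⇑e).mulVecLin
      = LinearMap.range A.mulVecLin := by
    apply le_antisymm
    · rintro x ⟨v, rfl⟩
      refine ⟨v ∘ ⇑e.symm, ?_⟩
      simp only [Matrix.mulVecLin_apply]
      ext i
      rw [Matrix.mulVec, Matrix.mulVec]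
      simp only [Matrix.submatrix_apply, id_eq, dotProduct]
      rw [← Equiv.sum_comp e (fun j => A i j * (v ∘ ⇑e.symm) j)]
      simp
    · rintro x ⟨v, rfl⟩
      refine ⟨v ∘ ⇑e, ?_⟩
      simp only [Matrix.mulVecLin_apply]
      ext i
      rw [Matrix.mulVec, Matrix.mulVec]
      simp only [Matrix.submatrix_apply, id_eq, dotProduct]
      rw [← Equiv.sum_comp e (fun j => A i j * v j)]
      simp
  unfold Matrix.rank
  rw [hrange]

noncomputable def kerM (S : Sys K n) : Submodule K (Fin n → K) :=
  LinearMap.ker (Matrix.mulVecLin (Mc S).transpose)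

lemma mem_kerM_iff {S : Sys K n} {α : Fin n → K} :
    α ∈ kerM S ↔ ∀ j, ∑ i, α i * Mc S i j = 0 := by
  rw [kerM, LinearMap.mem_ker]
  rw [funext_iff]
  apply forall_congr'
  intro j
  simp only [Matrix.mulVecLin_apply, Matrix.mulVec, dotProduct,
    Matrix.transpose_apply, Pi.zero_apply]
  constructor
  · intro h; rw [← h]; apply Finset.sum_congr rfl; intros; ring
  · intro h; rw [← h]; apply Finset.sum_congr rfl; intros; ring

lemma finrank_kerM (S : Sys K n) : Module.finrank K (kerM S) = n - (Mc S).rank := by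
  have h1 : Module.finrank K (LinearMap.range (Matrix.mulVecLin (Mc S).transpose))
      + Module.finrank K (kerM S) = n := by
    rw [kerM, LinearMap.finrank_range_add_finrank_ker]
    simp [Module.finrank_pi]
  have h2 : (Mc S).transpose.rank = Module.finrank K (LinearMap.range (Matrix.mulVecLin (Mc S).transpose)) := rfl
  rw [Matrix.rank_transpose] at h2
  omega

lemma rank_Mc_le (S : Sys K n) : (Mc S).rank ≤ n - 1 := by
  have := Matrix.rank_le_card_width (Mc S)
  simpa using this

lemma exists_ker_ne (S : Sys K n) : ∃ α : Fin n → K, α ∈ kerM S ∧ α ≠ 0 := by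
  have h1 : 0 < Module.finrank K (kerM S) := by
    have := finrank_kerM S
    have h2 := rank_Mc_le S
    have hn := S.hn
    omega
  by_contra hc
  push_neg at hc
  have : kerM S = ⊥ := by
    rw [Submodule.eq_bot_iff]
    intro x hx
    by_contra hx0
    exact hx0 (hc x hx)
  rw [this, finrank_bot] at h1
  omega

lemma ker_rows (S : Sys K n) (hrk : (Mc S).rank = n - 1) {α : Fin n → K}
    (hα : α ∈ kerM S) (hα0 : α ≠ 0) : ∀ β ∈ kerM S, ∃ t : K, β = t • α := by
  have hfr : Module.finrank K (kerM S) = 1 := by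
    rw [finrank_kerM, hrk]
    have := S.hn
    omega
  have hsp : Submodule.span K {α} = kerM S := by
    apply Submodule.eq_of_le_of_finrank_le
    · rw [Submodule.span_le, Set.singleton_subset_iff]; exact hα
    · rw [hfr, finrank_span_singleton hα0]
  intro β hβ
  rw [← hsp] at hβ
  obtain ⟨t, ht⟩ := Submodule.mem_span_singleton.mp hβ
  exact ⟨t, ht.symm⟩

lemma ker2 (S : Sys K n) (hrk : (Mc S).rank ≠ n - 1) :
    ∃ α α' : Fin n → K, α ∈ kerM S ∧ α' ∈ kerM S ∧ α ≠ 0 ∧ ∀ t : K, α' ≠ t • α := by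
  obtain ⟨α, hα, hα0⟩ := exists_ker_ne S
  have h2 : 2 ≤ Module.finrank K (kerM S) := by
    have h1 := finrank_kerM S
    have h2 := rank_Mc_le S
    have hn := S.hn
    omega
  by_contra hc
  push_neg at hc
  have hle : kerM S ≤ Submodule.span K {α} := by
    intro β hβ
    obtain ⟨t, ht⟩ := hc α β hα hβ hα0  -- shape?
    exact Submodule.mem_span_singleton.mpr ⟨t, ht.symm⟩
  have : Module.finrank K (kerM S) ≤ 1 := by
    calc Module.finrank K (kerM S) ≤ Module.finrank K (Submodule.span K {α}) :=
          Submodule.finrank_mono hle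
    _ = 1 := finrank_span_singleton hα0
  omega

end Aux
namespace Aux

variable {K : Type} [Field K] {n : ℕ}

lemma hom_comm_D (S : Sys K n) (φ : R K n →ₐ[K] R K n)
    (hX : ∀ v : Vr n, φ (S.D (X v)) = S.D (φ (X v))) :
    ∀ f, φ (S.D f) = S.D (φ f) := by
  intro f
  induction f using MvPolynomial.induction_on with
  | C c =>
    rw [S.hD_C]
    have h1 : ∀ b : K, φ (C b) = C b := by
      intro b
      rw [← MvPolynomial.algebraMap_eq, AlgHom.commutes]
    rw [h1, h1, S.hD_C]
  | add p q hp hq => simp only [map_add, hp, hq]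
  | mul_X p v hp =>
    have h1 : S.D (p * X v) = p * S.D (X v) + X v * S.D p := by
      rw [Derivation.leibniz, smul_eq_mul, smul_eq_mul]
    have h2 : S.D (φ p * φ (X v)) = φ p * S.D (φ (X v)) + φ (X v) * S.D (φ p) := by
      rw [Derivation.leibniz, smul_eq_mul, smul_eq_mul]
    rw [h1, map_add, map_mul, map_mul, map_mul, h2, hp, hX]

lemma hom_comm_D_iter (S : Sys K n) (φ : R K n →ₐ[K] R K n)
    (hX : ∀ v : Vr n, φ (S.D (X v)) = S.D (φ (X v))) (f : R K n) (k : ℕ) :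
    φ ((⇑S.D)^[k] f) = (⇑S.D)^[k] (φ f) := by
  induction k with
  | zero => simp
  | succ k ih =>
    rw [Function.iterate_succ_apply', Function.iterate_succ_apply', hom_comm_D S φ hX, ih]

lemma subst_C (S : Sys K n) (c : K) : S.subst (C c) = C c := by
  rw [Sys.subst, MvPolynomial.aeval_C, MvPolynomial.algebraMap_eq]

lemma subst_X_inl (S : Sys K n) (i : Fin n) (k : ℕ) :
    S.subst (X ((Sum.inl i, k) : Vr n)) = (⇑S.D)^[k] (C (S.a i) - S.H i) := by
  rw [Sys.subst, MvPolynomial.aeval_X]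
  rfl

lemma subst_X_inr (S : Sys K n) (j : Fin (n-1)) (k : ℕ) :
    S.subst (X ((Sum.inr j, k) : Vr n)) = X ((Sum.inr j, k) : Vr n) := by
  rw [Sys.subst, MvPolynomial.aeval_X]
  rfl

lemma subst_comm_D (S : Sys K n) (f : R K n) (k : ℕ) :
    S.subst ((⇑S.D)^[k] f) = (⇑S.D)^[k] (S.subst f) := by
  apply hom_comm_D_iter
  rintro ⟨v, m⟩
  rw [S.hD_X]
  cases v with
  | inl i =>
    rw [subst_X_inl, subst_X_inl, Function.iterate_succ_apply']
  | inr j =>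
    rw [subst_X_inr, subst_X_inr, S.hD_X]

/-- the generating linear polynomial attached to a kernel vector -/
noncomputable def Aal (S : Sys K n) (α : Fin n → K) : R K n :=
  (∑ i, C (α i) * X ((Sum.inl i, 0) : Vr n)) - C (∑ i, α i * S.a i)

lemma Aal_eq_xi (S : Sys K n) (α : Fin n → K) :
    Aal S α = ∑ i, C (α i) * xi S i 0 := by
  rw [Aal]
  have : ∀ i ∈ Finset.univ, C (α i) * xi S i 0
      = C (α i) * X ((Sum.inl i, 0) : Vr n) - C (α i * S.a i) := by
    intro i _
    rw [xi, Function.iterate_zero_apply, mul_sub, ← map_mul]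
  rw [Finset.sum_congr rfl this, Finset.sum_sub_distrib, ← map_sum]

lemma sum_CH_eq_zero (S : Sys K n) (hN : S.Nn = 0) {α : Fin n → K} (hα : α ∈ kerM S) :
    ∑ i, C (α i) * S.H i = 0 := by
  have h1 : ∀ i ∈ Finset.univ, C (α i) * S.H i
      = ∑ j, C (α i * Mc S i j) * X ((Sum.inr j, 0) : Vr n) := by
    intro i _
    rw [HL1 S hN i, Finset.mul_sum]
    apply Finset.sum_congr rfl
    intro j _
    rw [← mul_assoc, ← map_mul]
  rw [Finset.sum_congr rfl h1, Finset.sum_comm]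
  apply Finset.sum_eq_zero
  intro j _
  have h2 : ∑ i, C (α i * Mc S i j) * X ((Sum.inr j, 0) : Vr n)
      = C (∑ i, α i * Mc S i j) * X ((Sum.inr j, 0) : Vr n) := by
    rw [map_sum, Finset.sum_mul]
  rw [h2, mem_kerM_iff.mp hα j, map_zero, zero_mul]

lemma subst_Aal (S : Sys K n) (hN : S.Nn = 0) {α : Fin n → K} (hα : α ∈ kerM S) :
    S.subst (Aal S α) = 0 := by
  rw [Aal, map_sub, map_sum, subst_C]
  have h1 : ∀ i ∈ Finset.univ, S.subst (C (α i) * X ((Sum.inl i, 0) : Vr n))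
      = C (α i * S.a i) - C (α i) * S.H i := by
    intro i _
    rw [map_mul, subst_C, subst_X_inl, Function.iterate_zero_apply, mul_sub, ← map_mul]
  rw [Finset.sum_congr rfl h1, Finset.sum_sub_distrib, ← map_sum,
    sum_CH_eq_zero S hN hα, sub_zero, sub_self]

lemma subst_DkAal (S : Sys K n) (hN : S.Nn = 0) {α : Fin n → K} (hα : α ∈ kerM S) (k : ℕ) :
    S.subst ((⇑S.D)^[k] (Aal S α)) = 0 := by
  rw [subst_comm_D, subst_Aal S hN hα]
  induction k with
  | zero => simp
  | succ k ih => rw [Function.iterate_succ_apply', ih, map_zero]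

/-- span of all `ξᵢᵐ`, `m < u` -/
noncomputable def BxiAll (S : Sys K n) (u : ℕ) : Submodule K (R K n) :=
  Submodule.span K {f | ∃ i m, m < u ∧ f = xi S i m}

lemma BxiAll_gen (S : Sys K n) {m u : ℕ} (i : Fin n) (h : m < u) : xi S i m ∈ BxiAll S u :=
  Submodule.subset_span ⟨i, m, h, rfl⟩

lemma BxiAll_mono (S : Sys K n) {u u' : ℕ} (h : u ≤ u') : BxiAll S u ≤ BxiAll S u' :=
  Submodule.span_mono (fun f ⟨i, m, hm, hf⟩ => ⟨i, m, lt_of_lt_of_le hm h, hf⟩)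

lemma D_mem_BxiAll (S : Sys K n) {u : ℕ} {f : R K n} (hf : f ∈ BxiAll S u) :
    S.D f ∈ BxiAll S (u + 1) := by
  induction hf using Submodule.span_induction with
  | mem x h =>
    obtain ⟨i, m, hm, rfl⟩ := h
    rw [D_xi]
    exact Submodule.subset_span ⟨i, m+1, by omega, rfl⟩
  | zero => rw [map_zero]; exact Submodule.zero_mem _
  | add x y hx hy ihx ihy => rw [map_add]; exact Submodule.add_mem _ ihx ihy
  | smul c x hx ih =>
    rw [D_smul]
    exact Submodule.add_mem _
      (Submodule.smul_mem _ _ (BxiAll_mono S (by omega) hx)) (Submodule.smul_mem _ _ ih)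

lemma DkAal (S : Sys K n) (α : Fin n → K) (k : ℕ) :
    ∃ w ∈ BxiAll S k, (⇑S.D)^[k] (Aal S α) = (∑ i, C (α i) * xi S i k) + w := by
  have h := iterD S (xi S) (D_xi S) (BxiAll S) (fun h => BxiAll_mono S h)
    (fun i m u h => BxiAll_gen S i h) (fun hf => D_mem_BxiAll S hf)
    α Finset.univ 0 (f := Aal S α) (w0 := 0) (Submodule.zero_mem _)
    (by rw [Aal_eq_xi, add_zero]) k
  simpa using h

lemma DkH (S : Sys K n) (hN : S.Nn = 0) (i : Fin n) (k : ℕ) :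
    ∃ w ∈ BltX (K := K) (fun j : Fin (n-1) => Sum.inr j) k,
      (⇑S.D)^[k] (S.H i) = (∑ j, C (Mc S i j) * X ((Sum.inr j, k) : Vr n)) + w := by
  have h := iterD S (fun j m => X ((Sum.inr j, m) : Vr n))
    (fun j m => S.hD_X (Sum.inr j) m) (BltX (fun j : Fin (n-1) => Sum.inr j))
    (fun h => BltX_mono _ h) (fun z m u h => mem_BltX_gen _ z h)
    (fun hf => D_mem_BltX S hf)
    (Mc S i) Finset.univ 0 (f := S.H i) (w0 := 0) (Submodule.zero_mem _)
    (by rw [HL1 S hN i, add_zero]) k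
  simpa using h

lemma xi_mem (S : Sys K n) (i₀ : Fin n) (α : Fin n → K) (hα0 : α i₀ ≠ 0) (k : ℕ) :
    xi S i₀ k ∈ (Submodule.restrictScalars K
        (Ideal.span {g | ∃ k, g = (⇑S.D)^[k] (Aal S α)})) ⊔ Bxi S i₀ (k+1) := by
  induction k using Nat.strong_induction_on with
  | _ k ih =>
    set J := Ideal.span {g | ∃ k, g = (⇑S.D)^[k] (Aal S α)} with hJ
    set Mk := (Submodule.restrictScalars K J) ⊔ Bxi S i₀ (k+1) with hMk
    have hDk : (⇑S.D)^[k] (Aal S α) ∈ Mk :=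
      le_sup_left (α := Submodule K (R K n))
        ((Submodule.restrictScalars_mem K J _).mpr (Ideal.subset_span ⟨k, rfl⟩))
    obtain ⟨w, hw, heq⟩ := DkAal S α k
    have hwM : w ∈ Mk := by
      refine Submodule.span_le.mpr ?_ hw
      rintro f ⟨i, m, hm, rfl⟩
      by_cases hi : i = i₀
      · have := ih m hm
        rw [hi]
        exact (sup_le_sup (le_refl _) (Bxi_mono S i₀ (by omega))) this
      · exact le_sup_right (α := Submodule K (R K n))
          (Submodule.subset_span ⟨i, hi, m, by omega, rfl⟩)
    have hsum : (∑ i ∈ Finset.univ.erase i₀, C (α i) * xi S i k) ∈ Mk := by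
      apply Submodule.sum_mem
      intro i hi
      rw [← MvPolynomial.smul_eq_C_mul]
      apply Submodule.smul_mem
      exact le_sup_right (α := Submodule K (R K n))
        (Submodule.subset_span ⟨i, (Finset.mem_erase.mp hi).1, k, by omega, rfl⟩)
    have hCxi : C (α i₀) * xi S i₀ k ∈ Mk := by
      have hsplit : (∑ i, C (α i) * xi S i k)
          = C (α i₀) * xi S i₀ k + ∑ i ∈ Finset.univ.erase i₀, C (α i) * xi S i k :=
        (Finset.add_sum_erase _ _ (Finset.mem_univ i₀)).symm
      have : C (α i₀) * xi S i₀ k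
          = (⇑S.D)^[k] (Aal S α) - (∑ i ∈ Finset.univ.erase i₀, C (α i) * xi S i k) - w := by
        rw [heq, hsplit]; ring
      rw [this]
      exact Submodule.sub_mem _ (Submodule.sub_mem _ hDk hsum) hwM
    have : xi S i₀ k = (α i₀)⁻¹ • (C (α i₀) * xi S i₀ k) := by
      rw [← MvPolynomial.smul_eq_C_mul, smul_smul, inv_mul_cancel₀ hα0, one_smul]
    rw [this]
    exact Submodule.smul_mem _ _ hCxi

lemma exists_theta (S : Sys K n) (i₀ : Fin n) (α : Fin n → K) (hα0 : α i₀ ≠ 0) (k : ℕ) :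
    ∃ z ∈ Bxi S i₀ (k+1),
      xi S i₀ k - z ∈ Ideal.span {g | ∃ k, g = (⇑S.D)^[k] (Aal S α)} := by
  have h := xi_mem S i₀ α hα0 k
  obtain ⟨y, hy, z, hz, hyz⟩ := Submodule.mem_sup.mp h
  refine ⟨z, hz, ?_⟩
  have : xi S i₀ k - z = y := by rw [← hyz]; ring
  rw [this]
  exact (Submodule.restrictScalars_mem K _ _).mp hy

end Aux
namespace Aux

variable {K : Type} [Field K] {n : ℕ}

lemma Dk_C (S : Sys K n) (c : K) (k : ℕ) :
    (⇑S.D)^[k] (C c : R K n) = C ((⇑S.der)^[k] c) := by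
  induction k generalizing c with
  | zero => simp
  | succ k ih =>
    rw [Function.iterate_succ_apply, Function.iterate_succ_apply, S.hD_C, ih]

lemma Dk_sub (S : Sys K n) (f g : R K n) (k : ℕ) :
    (⇑S.D)^[k] (f - g) = (⇑S.D)^[k] f - (⇑S.D)^[k] g := by
  induction k with
  | zero => simp
  | succ k ih =>
    rw [Function.iterate_succ_apply', ih, map_sub, Function.iterate_succ_apply',
      Function.iterate_succ_apply']

/-- the index type for the variables `x_{i,k}`, `i ≠ i₀` -/
abbrev SIdx (n : ℕ) (i₀ : Fin n) := {i : Fin n // i ≠ i₀} × ℕ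

/-- `ℓ_{(i,m)} = ∂^m Hᵢ` -/
noncomputable def ellf (S : Sys K n) (i₀ : Fin n) : SIdx n i₀ → R K n :=
  fun p => (⇑S.D)^[p.2] (S.H p.1.1)

lemma cf_ellf_high (S : Sys K n) (hN : S.Nn = 0) (i₀ : Fin n) (p : SIdx n i₀)
    (j : Fin (n-1)) (b : ℕ) (hb : p.2 < b) : cf (ellf S i₀ p) (Sum.inr j) b = 0 := by
  obtain ⟨w, hw, heq⟩ := DkH S hN p.1.1 p.2
  rw [ellf, heq, cf_add, cf_sum, cf_BltX hw _ _ (by omega), add_zero]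
  apply Finset.sum_eq_zero
  intro j' _
  rw [cf_CmulX, if_neg]
  intro hc
  have : p.2 = b := congrArg Prod.snd hc
  omega

lemma cf_ellf_top (S : Sys K n) (hN : S.Nn = 0) (i₀ : Fin n) (p : SIdx n i₀)
    (j : Fin (n-1)) : cf (ellf S i₀ p) (Sum.inr j) p.2 = Mc S p.1.1 j := by
  obtain ⟨w, hw, heq⟩ := DkH S hN p.1.1 p.2
  rw [ellf, heq, cf_add, cf_sum, cf_BltX hw _ _ (le_refl _), add_zero]
  have h1 : ∀ j' ∈ Finset.univ, cf (C (Mc S p.1.1 j') * X ((Sum.inr j', p.2) : Vr n))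
      (Sum.inr j) p.2 = if j' = j then Mc S p.1.1 j' else 0 := by
    intro j' _
    rw [cf_CmulX]
    by_cases h : j' = j
    · subst h; simp
    · rw [if_neg (by simp [h]), if_neg h]
  rw [Finset.sum_congr rfl h1, Finset.sum_ite_eq' Finset.univ j]
  simp

lemma ellf_mem_spanX (S : Sys K n) (hN : S.Nn = 0) (i₀ : Fin n) (p : SIdx n i₀) :
    ellf S i₀ p ∈ Submodule.span K (Set.range (X : Vr n → R K n)) := by
  obtain ⟨w, hw, heq⟩ := DkH S hN p.1.1 p.2
  rw [ellf, heq]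
  refine Submodule.add_mem _ (Submodule.sum_mem _ fun j _ => ?_) (BltX_le_spanX _ _ hw)
  rw [← MvPolynomial.smul_eq_C_mul]
  exact Submodule.smul_mem _ _ (Submodule.subset_span ⟨_, rfl⟩)

lemma top_extract (S : Sys K n) (hN : S.Nn = 0) (i₀ : Fin n)
    (Hrows : ∀ β : Fin n → K, β ∈ kerM S → β i₀ = 0 → β = 0)
    (b : ℕ) (s : Finset (SIdx n i₀)) (g : SIdx n i₀ → K)
    (hb : ∀ p ∈ s, p.2 ≤ b) (hsum : (∑ p ∈ s, g p • ellf S i₀ p) = 0) :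
    ∀ p ∈ s, p.2 = b → g p = 0 := by
  classical
  set t := s.filter (fun q => q.2 = b) with ht
  intro p hps hp2
  have hpt : p ∈ t := Finset.mem_filter.mpr ⟨hps, hp2⟩
  set β : Fin n → K := fun i =>
    if h : i = i₀ then 0 else (if (⟨⟨i, h⟩, b⟩ : SIdx n i₀) ∈ s then g ⟨⟨i, h⟩, b⟩ else 0)
    with hβ
  have hβq : ∀ q ∈ t, β q.1.1 = g q := by
    intro q hq
    obtain ⟨hqs, hq2⟩ := Finset.mem_filter.mp hq
    rw [hβ]
    simp only
    rw [dif_neg q.1.2]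
    have hqe : (⟨⟨(q.1.1 : Fin n), q.1.2⟩, b⟩ : SIdx n i₀) = q := by
      refine Prod.ext (Subtype.ext rfl) ?_
      simp [hq2]
    rw [hqe, if_pos hqs]
  have hβker : β ∈ kerM S := by
    rw [mem_kerM_iff]
    intro j
    have hcf := congrArg (fun f => cf f (Sum.inr j) b) hsum
    simp only [cf_zero] at hcf
    rw [cf_sum] at hcf
    have h1 : ∀ q ∈ s, cf (g q • ellf S i₀ q) (Sum.inr j) b
        = if q.2 = b then g q * Mc S q.1.1 j else 0 := by
      intro q hqs
      rw [cf_smul]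
      by_cases hq2 : q.2 = b
      · rw [if_pos hq2, ← hq2, cf_ellf_top S hN]
      · rw [if_neg hq2, cf_ellf_high S hN i₀ q j b (lt_of_le_of_ne (hb q hqs) hq2), mul_zero]
    rw [Finset.sum_congr rfl h1, Finset.sum_ite, Finset.sum_const_zero, add_zero] at hcf
    have h0 : ∑ q ∈ t, g q * Mc S q.1.1 j = 0 := hcf
    have himg : ∀ i, i ∉ t.image (fun q => (q.1.1 : Fin n)) → β i = 0 := by
      intro i hi
      rw [hβ]
      simp only
      by_cases h : i = i₀
      · rw [dif_pos h]
      · rw [dif_neg h, if_neg]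
        intro hmem
        refine hi (Finset.mem_image.mpr ⟨⟨⟨i, h⟩, b⟩, ?_, rfl⟩)
        exact Finset.mem_filter.mpr ⟨hmem, rfl⟩
    have hinj : ∀ q ∈ t, ∀ q' ∈ t, (q.1.1 : Fin n) = q'.1.1 → q = q' := by
      intro q hq q' hq' hqq
      obtain ⟨_, hq2⟩ := Finset.mem_filter.mp hq
      obtain ⟨_, hq2'⟩ := Finset.mem_filter.mp hq'
      refine Prod.ext (Subtype.ext hqq) ?_
      simp [hq2, hq2']
    calc ∑ i, β i * Mc S i j
        = ∑ i ∈ t.image (fun q => (q.1.1 : Fin n)), β i * Mc S i j := by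
          symm
          apply Finset.sum_subset (Finset.subset_univ _)
          intro i _ hi
          rw [himg i hi, zero_mul]
      _ = ∑ q ∈ t, β q.1.1 * Mc S q.1.1 j := Finset.sum_image hinj
      _ = ∑ q ∈ t, g q * Mc S q.1.1 j := Finset.sum_congr rfl (fun q hq => by rw [hβq q hq])
      _ = 0 := h0
  have hβ0 : β = 0 := Hrows β hβker (by rw [hβ]; simp)
  have : g p = β p.1.1 := (hβq p hpt).symm
  rw [this, hβ0]
  rfl

lemma li_ellf (S : Sys K n) (hN : S.Nn = 0) (i₀ : Fin n)
    (Hrows : ∀ β : Fin n → K, β ∈ kerM S → β i₀ = 0 → β = 0) :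
    LinearIndependent K (ellf S i₀) := by
  classical
  rw [linearIndependent_iff']
  suffices h : ∀ b : ℕ, ∀ s : Finset (SIdx n i₀), ∀ g : SIdx n i₀ → K,
      (∀ p ∈ s, p.2 ≤ b) → (∑ p ∈ s, g p • ellf S i₀ p) = 0 → ∀ p ∈ s, g p = 0 by
    intro s g hsum p hp
    exact h (s.sup (fun p => p.2)) s g (fun q hq => Finset.le_sup (f := fun p => p.2) hq)
      hsum p hp
  intro b
  induction b with
  | zero =>
    intro s g hb hsum p hp
    exact top_extract S hN i₀ Hrows 0 s g hb hsum p hp (Nat.le_zero.mp (hb p hp))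
  | succ b ih =>
    intro s g hb hsum p hp
    have htop := top_extract S hN i₀ Hrows (b+1) s g hb hsum
    by_cases hp2 : p.2 = b + 1
    · exact htop p hp hp2
    · set s' := s.filter (fun q => ¬ q.2 = b + 1) with hs'
      have hsum' : (∑ q ∈ s', g q • ellf S i₀ q) = 0 := by
        have hsplit := Finset.sum_filter_add_sum_filter_not s
          (fun q => q.2 = b + 1) (fun q => g q • ellf S i₀ q)
        have hz : (∑ q ∈ s.filter (fun q => q.2 = b + 1), g q • ellf S i₀ q) = 0 := by
          apply Finset.sum_eq_zero
          intro q hq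
          obtain ⟨hqs, hq2⟩ := Finset.mem_filter.mp hq
          rw [htop q hqs hq2, zero_smul]
        rw [← hsplit, hz, zero_add] at hsum
        exact hsum
      refine ih s' g ?_ hsum' p (Finset.mem_filter.mpr ⟨hp, hp2⟩)
      intro q hq
      obtain ⟨hqs, hq2⟩ := Finset.mem_filter.mp hq
      have := hb q hqs
      omega

lemma aeval_inj_of_li {ι : Type} (lf : ι → R K n) (hli : LinearIndependent K lf)
    (hsp : ∀ s, lf s ∈ Submodule.span K (Set.range (X : Vr n → R K n))) :
    Function.Injective ⇑(MvPolynomial.aeval (R := K) lf) := by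
  classical
  set W := Submodule.span K (Set.range lf) with hW
  obtain ⟨W', hW'⟩ := Submodule.exists_isCompl W
  set proj := Submodule.linearProjOfIsCompl W W' hW' with hproj
  set G : R K n →ₗ[K] (ι →₀ K) := hli.repr.comp proj with hG
  set emb : (ι →₀ K) →ₗ[K] MvPolynomial ι K :=
    Finsupp.linearCombination K (fun s => (X s : MvPolynomial ι K)) with hemb
  set Ψ : R K n →ₐ[K] MvPolynomial ι K := MvPolynomial.aeval (fun v => emb (G (X v))) with hΨ
  have hΨspan : ∀ f ∈ Submodule.span K (Set.range (X : Vr n → R K n)),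
      Ψ f = emb (G f) := by
    intro f hf
    induction hf using Submodule.span_induction with
    | mem x h =>
      obtain ⟨v, rfl⟩ := h
      rw [hΨ, MvPolynomial.aeval_X]
    | zero => simp
    | add x y hx hy ihx ihy => rw [map_add, map_add, map_add, ihx, ihy]
    | smul c x hx ihx => rw [map_smul, map_smul, map_smul, ihx]
  have hΨl : ∀ s, Ψ (lf s) = X s := by
    intro s
    rw [hΨspan _ (hsp s)]
    have hmem : lf s ∈ W := Submodule.subset_span ⟨s, rfl⟩
    have h1 : proj (lf s) = ⟨lf s, hmem⟩ := by
      have := Submodule.linearProjOfIsCompl_apply_left hW' ⟨lf s, hmem⟩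
      exact this
    rw [hG, LinearMap.comp_apply, h1]
    rw [hli.repr_eq_single s ⟨lf s, hmem⟩ rfl]
    rw [hemb]
    simp [Finsupp.linearCombination_single]
  have hcomp : ∀ q, Ψ (MvPolynomial.aeval lf q) = q := by
    intro q
    have heq : (Ψ.comp (MvPolynomial.aeval lf) : MvPolynomial ι K →ₐ[K] MvPolynomial ι K)
        = AlgHom.id K _ := by
      apply MvPolynomial.algHom_ext
      intro s
      simp only [AlgHom.comp_apply, MvPolynomial.aeval_X, AlgHom.id_apply]
      exact hΨl s
    calc Ψ (MvPolynomial.aeval lf q)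
        = (Ψ.comp (MvPolynomial.aeval lf)) q := rfl
      _ = q := by rw [heq]; rfl
  exact Function.LeftInverse.injective hcomp

lemma aeval_affine_inj {ι : Type} (lf : ι → R K n) (cst : ι → K)
    (hinj : Function.Injective ⇑(MvPolynomial.aeval (R := K) lf)) :
    Function.Injective ⇑(MvPolynomial.aeval (R := K) (fun s => C (cst s) - lf s)) := by
  set θinv : MvPolynomial ι K →ₐ[K] MvPolynomial ι K :=
    MvPolynomial.aeval (fun s => C (cst s) - X s) with hθ
  have hθθ : ∀ q, θinv (θinv q) = q := by
    intro q
    have heq : (θinv.comp θinv : MvPolynomial ι K →ₐ[K] MvPolynomial ι K) = AlgHom.id K _ := by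
      apply MvPolynomial.algHom_ext
      intro s
      simp only [AlgHom.comp_apply, AlgHom.id_apply, hθ, MvPolynomial.aeval_X, map_sub,
        MvPolynomial.aeval_C, MvPolynomial.algebraMap_eq]
      ring
    calc θinv (θinv q) = (θinv.comp θinv) q := rfl
      _ = q := by rw [heq]; rfl
  have hcomp : (MvPolynomial.aeval (R := K) (fun s => C (cst s) - lf s)
      : MvPolynomial ι K →ₐ[K] R K n) = (MvPolynomial.aeval lf).comp θinv := by
    apply MvPolynomial.algHom_ext
    intro s
    simp only [MvPolynomial.aeval_X, AlgHom.comp_apply, hθ, map_sub,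
      MvPolynomial.aeval_C, MvPolynomial.algebraMap_eq]
  rw [hcomp]
  rw [AlgHom.coe_comp]
  exact Function.Injective.comp hinj (Function.LeftInverse.injective hθθ)

end Aux
namespace Aux

variable {K : Type} [Field K] {n : ℕ}

lemma cf_sum_CX_inl (c : Fin n → K) (d : ℕ) (i : Fin n) (m : ℕ) :
    cf (∑ i', C (c i') * X ((Sum.inl i', d) : Vr n)) (Sum.inl i) m
      = if m = d then c i else 0 := by
  rw [cf_sum]
  have h1 : ∀ i' ∈ Finset.univ, cf (C (c i') * X ((Sum.inl i', d) : Vr n)) (Sum.inl i) m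
      = if m = d then (if i' = i then c i' else 0) else 0 := by
    intro i' _
    rw [cf_CmulX]
    by_cases hm : m = d
    · subst hm
      by_cases hi : i' = i
      · subst hi; simp
      · rw [if_neg (by simp [hi]), if_pos rfl, if_neg hi]
    · rw [if_neg (by intro hc; exact hm (congrArg Prod.snd hc).symm), if_neg hm]
  rw [Finset.sum_congr rfl h1]
  by_cases hm : m = d
  · simp only [if_pos hm]
    rw [Finset.sum_ite_eq' Finset.univ i]
    simp
  · simp only [if_neg hm]
    simp

lemma cf_Aal (S : Sys K n) (α : Fin n → K) (i : Fin n) : cf (Aal S α) (Sum.inl i) 0 = α i := by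
  rw [Aal, cf_sub, cf_C, sub_zero, cf_sum_CX_inl]
  simp

lemma vars_sum_CX {ι : Type} [Fintype ι] [DecidableEq ι] (s : Finset ι) (c : ι → K)
    (e : ι → Vr n) : (∑ z ∈ s, C (c z) * X (e z)).vars ⊆ s.image e := by
  classical
  intro w hw
  have h1 := MvPolynomial.vars_sum_subset s (fun z => C (c z) * X (e z)) hw
  obtain ⟨z, hz, hw2⟩ := Finset.mem_biUnion.mp h1
  have h2 := MvPolynomial.vars_mul _ _ hw2
  rw [MvPolynomial.vars_C] at h2
  simp only [Finset.empty_union] at h2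
  rw [MvPolynomial.vars_X] at h2
  exact Finset.mem_image.mpr ⟨z, hz, (Finset.mem_singleton.mp h2).symm⟩

lemma deg_sum_CX {ι : Type} (s : Finset ι) (c : ι → K) (e : ι → Vr n) :
    (∑ z ∈ s, C (c z) * X (e z)).totalDegree ≤ 1 := by
  refine le_trans (MvPolynomial.totalDegree_finset_sum s _) ?_
  apply Finset.sup_le
  intro z _
  refine le_trans (MvPolynomial.totalDegree_mul _ _) ?_
  rw [MvPolynomial.totalDegree_C, MvPolynomial.totalDegree_X]

lemma Aal_linear (S : Sys K n) (α : Fin n → K) : IsLinearPoly (Aal S α) := by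
  rw [IsLinearPoly, Aal, sub_eq_add_neg]
  refine le_trans (MvPolynomial.totalDegree_add _ _) ?_
  rw [MvPolynomial.totalDegree_neg, MvPolynomial.totalDegree_C]
  simp only [sup_le_iff]
  exact ⟨deg_sum_CX _ _ _, by omega⟩

lemma Aal_xOnly (S : Sys K n) (α : Fin n → K) : xOnly (Aal S α) := by
  intro w hw
  rw [Aal, sub_eq_add_neg] at hw
  have h1 := MvPolynomial.vars_add_subset _ _ hw
  rw [MvPolynomial.vars_neg, MvPolynomial.vars_C, Finset.union_empty] at h1
  have h2 := vars_sum_CX Finset.univ α (fun i => ((Sum.inl i, 0) : Vr n)) h1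
  obtain ⟨i, _, rfl⟩ := Finset.mem_image.mp h2
  rfl

lemma Aal_ne_zero (S : Sys K n) {α : Fin n → K} {i₀ : Fin n} (h : α i₀ ≠ 0) :
    Aal S α ≠ 0 := by
  intro hc
  apply h
  rw [← cf_Aal S α i₀, hc, cf_zero]

lemma subst_J_zero (S : Sys K n) (hN : S.Nn = 0) {α : Fin n → K} (hα : α ∈ kerM S)
    {p : R K n} (hp : p ∈ Ideal.span {g | ∃ k, g = (⇑S.D)^[k] (Aal S α)}) :
    S.subst p = 0 := by
  have hle : Ideal.span {g | ∃ k, g = (⇑S.D)^[k] (Aal S α)}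
      ≤ RingHom.ker (S.subst : R K n →ₐ[K] R K n) := by
    rw [Ideal.span_le]
    rintro g ⟨k, rfl⟩
    exact RingHom.mem_ker.mpr (subst_DkAal S hN hα k)
  exact RingHom.mem_ker.mp (hle hp)

/-- embedding of the reduced variable index set -/
def embf (i₀ : Fin n) : SIdx n i₀ → Vr n := fun p => (Sum.inl p.1.1, p.2)

lemma vars_xi (S : Sys K n) (i : Fin n) (m : ℕ) :
    (xi S i m).vars ⊆ {((Sum.inl i, m) : Vr n)} := by
  classical
  rw [xi, sub_eq_add_neg]
  intro w hw
  have h1 := MvPolynomial.vars_add_subset _ _ hw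
  rw [MvPolynomial.vars_neg, MvPolynomial.vars_C, Finset.union_empty,
    MvPolynomial.vars_X] at h1
  exact h1

lemma Bxi_le_supported (S : Sys K n) (i₀ : Fin n) (u : ℕ) :
    Bxi S i₀ u ≤ Subalgebra.toSubmodule (MvPolynomial.supported K (Set.range (embf i₀))) := by
  rw [Bxi, Submodule.span_le]
  rintro f ⟨i, hi, m, hm, rfl⟩
  simp only [SetLike.mem_coe, Subalgebra.mem_toSubmodule]
  rw [MvPolynomial.mem_supported]
  intro w hw
  have := vars_xi S i m (Finset.mem_coe.mp hw)
  rw [Finset.mem_singleton] at this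
  subst this
  exact ⟨⟨⟨i, hi⟩, m⟩, rfl⟩

lemma supported_range_sub {i₀ : Fin n} {p : R K n}
    (hp : p ∈ MvPolynomial.supported K (Set.range (embf i₀))) :
    ∃ q : MvPolynomial (SIdx n i₀) K, MvPolynomial.rename (embf i₀) q = p := by
  rw [MvPolynomial.supported_eq_adjoin_X] at hp
  have hle : Algebra.adjoin K (X '' Set.range (embf i₀))
      ≤ (MvPolynomial.rename (embf i₀)).range := by
    apply Algebra.adjoin_le
    rintro _ ⟨_, ⟨s, rfl⟩, rfl⟩
    exact ⟨X s, MvPolynomial.rename_X _ _⟩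
  obtain ⟨q, hq⟩ := (AlgHom.mem_range _).mp (hle hp)
  exact ⟨q, hq⟩

lemma dimfull_of_rank (S : Sys K n) (hN : S.Nn = 0) (hrk : (Mc S).rank = n - 1) :
    S.DimFull := by
  classical
  obtain ⟨α, hα, hα0⟩ := exists_ker_ne S
  obtain ⟨i₀, hαi₀⟩ := Function.ne_iff.mp hα0
  have Hrows : ∀ β : Fin n → K, β ∈ kerM S → β i₀ = 0 → β = 0 := by
    intro β hβ hβ0
    obtain ⟨t, rfl⟩ := ker_rows S hrk hα hα0 β hβ
    have ht : t * α i₀ = 0 := hβ0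
    have : t = 0 := by
      rcases mul_eq_zero.mp ht with h | h
      · exact h
      · exact absurd h hαi₀
    rw [this, zero_smul]
  set J := Ideal.span {g | ∃ k, g = (⇑S.D)^[k] (Aal S α)} with hJ
  refine ⟨Aal S α, Aal_ne_zero S hαi₀, Aal_linear S α, Aal_xOnly S α, ?_⟩
  intro f
  constructor
  · -- memID → memDiffSpanX
    rintro ⟨hfx, hfs⟩
    refine ⟨hfx, ?_⟩
    -- construct the elimination map σ
    choose θ hθB hθJ using exists_theta S i₀ α hαi₀
    set gσ : Vr n → R K n := fun v =>
      if v.1 = Sum.inl i₀ then θ v.2 + C ((⇑S.der)^[v.2] (S.a i₀)) else X v with hgσ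
    set σ : R K n →ₐ[K] R K n := MvPolynomial.aeval gσ with hσ
    have hσX : ∀ v : Vr n, σ (X v) = gσ v := fun v => MvPolynomial.aeval_X _ v
    have hXg : ∀ v : Vr n, X v - gσ v ∈ J := by
      intro v
      rw [hgσ]
      by_cases h : v.1 = Sum.inl i₀
      · simp only [if_pos h]
        have hv : v = (Sum.inl i₀, v.2) := Prod.ext h rfl
        have heq : X v - (θ v.2 + C ((⇑S.der)^[v.2] (S.a i₀))) = xi S i₀ v.2 - θ v.2 := by
          rw [xi, hv]; ring
        rw [heq]
        exact hθJ v.2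
      · simp only [if_neg h, sub_self]
        exact Submodule.zero_mem _
    have hsubσ : ∀ p : R K n, p - σ p ∈ J := by
      intro p
      induction p using MvPolynomial.induction_on with
      | C c =>
        have : σ (C c) = C c := by
          rw [← MvPolynomial.algebraMap_eq, AlgHom.commutes, MvPolynomial.algebraMap_eq]
        rw [this, sub_self]
        exact Submodule.zero_mem _
      | add p q hp hq =>
        have : p + q - σ (p + q) = (p - σ p) + (q - σ q) := by rw [map_add]; ring
        rw [this]
        exact Submodule.add_mem _ hp hq
      | mul_X p v hp =>
        have h1 : σ (p * X v) = σ p * gσ v := by rw [map_mul, hσX]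
        have h2 : p * X v - σ p * gσ v = p * (X v - gσ v) + (p - σ p) * gσ v := by ring
        rw [h1, h2]
        exact Submodule.add_mem _ (Ideal.mul_mem_left _ _ (hXg v)) (Ideal.mul_mem_right _ _ hp)
    have hσf_sup : σ f ∈ MvPolynomial.supported K (Set.range (embf i₀)) := by
      have hf_sup : f ∈ MvPolynomial.supported K {w : Vr n | (w.1).isLeft = true} := by
        rw [MvPolynomial.mem_supported]
        intro w hw
        exact hfx w (Finset.mem_coe.mp hw)
      rw [MvPolynomial.supported_eq_adjoin_X] at hf_sup
      have hmap : σ f ∈ Subalgebra.map σ (Algebra.adjoin K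
          (X '' {w : Vr n | (w.1).isLeft = true})) :=
        Subalgebra.mem_map.mpr ⟨f, hf_sup, rfl⟩
      rw [AlgHom.map_adjoin] at hmap
      refine Algebra.adjoin_le ?_ hmap
      rintro _ ⟨_, ⟨w, hw, rfl⟩, rfl⟩
      rw [SetLike.mem_coe, hσX, hgσ]
      by_cases h : w.1 = Sum.inl i₀
      · simp only [if_pos h]
        refine Subalgebra.add_mem _ ?_ ?_
        · have := Bxi_le_supported S i₀ (w.2 + 1) (hθB w.2)
          rwa [Subalgebra.mem_toSubmodule] at this
        · rw [← MvPolynomial.algebraMap_eq]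
          exact Subalgebra.algebraMap_mem _ _
      · simp only [if_neg h]
        rw [MvPolynomial.mem_supported]
        intro w' hw'
        rw [Finset.mem_coe, MvPolynomial.vars_X, Finset.mem_singleton] at hw'
        rw [hw']
        obtain ⟨i, hi⟩ := Sum.isLeft_iff.mp (Set.mem_setOf_eq ▸ hw)
        refine ⟨⟨⟨i, ?_⟩, w.2⟩, ?_⟩
        · intro hc
          apply h
          rw [hi, hc]
        · rw [embf]
          exact Prod.ext hi.symm rfl
    have hσf0 : S.subst (σ f) = 0 := by
      have h1 := subst_J_zero S hN hα (hsubσ f)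
      rw [map_sub, hfs, zero_sub, neg_eq_zero] at h1
      exact h1
    obtain ⟨q, hq⟩ := supported_range_sub hσf_sup
    set Yf : SIdx n i₀ → R K n :=
      fun p => C ((⇑S.der)^[p.2] (S.a p.1.1)) - ellf S i₀ p with hYf
    have hYinj : Function.Injective ⇑(MvPolynomial.aeval (R := K) Yf) := by
      rw [hYf]
      exact aeval_affine_inj (ellf S i₀) _
        (aeval_inj_of_li _ (li_ellf S hN i₀ Hrows) (ellf_mem_spanX S hN i₀))
    have hq0 : MvPolynomial.aeval Yf q = 0 := by
      have h2 := hσf0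
      rw [← hq, Sys.subst, MvPolynomial.aeval_rename] at h2
      have hfun : ((fun w : Vr n => Sum.elim
          (fun i => (⇑S.D)^[w.2] (C (S.a i) - S.H i))
          (fun j => (X (Sum.inr j, w.2) : R K n)) w.1) ∘ (embf i₀)) = Yf := by
        funext p
        rw [Function.comp_apply, embf, hYf]
        simp only [Sum.elim_inl]
        rw [Dk_sub, Dk_C, ellf]
      rwa [hfun] at h2
    have hq00 : q = 0 := hYinj (by rw [hq0, map_zero])
    have hσf_zero : σ f = 0 := by rw [← hq, hq00, map_zero]
    have : f ∈ J := by
      have := hsubσ f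
      rwa [hσf_zero, sub_zero] at this
    exact this
  · rintro ⟨hfx, hfJ⟩
    exact ⟨hfx, subst_J_zero S hN hα hfJ⟩

end Aux
namespace Aux

variable {K : Type} [Field K] {n : ℕ}

lemma hcomp_mul (r g : R K n) (hg : g.IsHomogeneous 1) :
    (MvPolynomial.homogeneousComponent 1) (r * g) = C (MvPolynomial.coeff 0 r) * g := by
  classical
  apply MvPolynomial.ext
  intro d
  rw [MvPolynomial.coeff_homogeneousComponent, MvPolynomial.coeff_C_mul]
  by_cases hdeg : d.degree = 1
  · rw [if_pos hdeg, MvPolynomial.coeff_mul]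
    apply Finset.sum_eq_single ((0 : Vr n →₀ ℕ), d)
    · rintro ⟨d1, d2⟩ hmem hne
      have hd12 : d1 + d2 = d := Finset.HasAntidiagonal.mem_antidiagonal.mp hmem
      by_cases hc : MvPolynomial.coeff d2 g = 0
      · rw [hc, mul_zero]
      · exfalso
        have h2 : d2.degree = 1 := by
          rw [Finsupp.degree_eq_weight_one]; exact hg hc
        have h3 : d1.degree + d2.degree = 1 := by rw [← fdeg_add, hd12, hdeg]
        have h4 : d1.degree = 0 := by omega
        have h5 : d1 = 0 := (Finsupp.degree_eq_zero_iff d1).mp h4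
        apply hne
        rw [h5] at hd12 ⊢
        rw [zero_add] at hd12
        rw [hd12]
    · intro hmem
      exact absurd (Finset.HasAntidiagonal.mem_antidiagonal.mpr (zero_add d)) hmem
  · rw [if_neg hdeg, hg.coeff_eq_zero hdeg, mul_zero]

lemma hcomp_self {g : R K n} (hg : g.IsHomogeneous 1) :
    (MvPolynomial.homogeneousComponent 1) g = g := by
  apply MvPolynomial.ext
  intro d
  rw [MvPolynomial.coeff_homogeneousComponent]
  by_cases hdeg : d.degree = 1
  · rw [if_pos hdeg]
  · rw [if_neg hdeg, hg.coeff_eq_zero hdeg]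

lemma isHomog_sum_CX {ι : Type} (s : Finset ι) (c : ι → K) (e : ι → Vr n) :
    (∑ z ∈ s, C (c z) * X (e z)).IsHomogeneous 1 := by
  apply MvPolynomial.IsHomogeneous.sum
  intro z _
  have := (MvPolynomial.isHomogeneous_C (Vr n) (c z)).mul (MvPolynomial.isHomogeneous_X K (e z))
  simpa using this

lemma BltX_homog {ι : Type} (e : ι → Fin n ⊕ Fin (n-1)) (u : ℕ) :
    BltX (K := K) e u ≤ MvPolynomial.homogeneousSubmodule (Vr n) K 1 := by
  rw [BltX, Submodule.span_le]
  rintro f ⟨z, m, hm, rfl⟩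
  rw [SetLike.mem_coe, MvPolynomial.mem_homogeneousSubmodule]
  exact MvPolynomial.isHomogeneous_X K _

/-- the shear automorphism `ρ` -/
noncomputable def rho (S : Sys K n) : R K n →ₐ[K] R K n :=
  MvPolynomial.aeval (fun v : Vr n => Sum.elim
    (fun i => X v + (⇑S.D)^[v.2] (C (S.a i) - S.H i)) (fun _ => X v) v.1)

lemma rho_C (S : Sys K n) (c : K) : rho S (C c) = C c := by
  rw [← MvPolynomial.algebraMap_eq, AlgHom.commutes, MvPolynomial.algebraMap_eq]

lemma rho_X_inl (S : Sys K n) (i : Fin n) (k : ℕ) :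
    rho S (X ((Sum.inl i, k) : Vr n))
      = X ((Sum.inl i, k) : Vr n) + (⇑S.D)^[k] (C (S.a i) - S.H i) := by
  rw [rho, MvPolynomial.aeval_X]
  rfl

lemma rho_X_inr (S : Sys K n) (j : Fin (n-1)) (k : ℕ) :
    rho S (X ((Sum.inr j, k) : Vr n)) = X ((Sum.inr j, k) : Vr n) := by
  rw [rho, MvPolynomial.aeval_X]
  rfl

lemma rho_comm_D (S : Sys K n) (f : R K n) (k : ℕ) :
    rho S ((⇑S.D)^[k] f) = (⇑S.D)^[k] (rho S f) := by
  apply hom_comm_D_iter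
  rintro ⟨v, m⟩
  rw [S.hD_X]
  cases v with
  | inl i =>
    rw [rho_X_inl, rho_X_inl, map_add, S.hD_X, Function.iterate_succ_apply']
  | inr j =>
    rw [rho_X_inr, rho_X_inr, S.hD_X]

lemma rho_linear (S : Sys K n) {A : R K n} (hx : xOnly A) (hd : A.totalDegree ≤ 1) :
    rho S A = A + S.subst A - C (MvPolynomial.coeff 0 A) := by
  have hrep := rep_linear A hd
  have h1 : ∀ v ∈ A.vars, rho S (C (MvPolynomial.coeff (Finsupp.single v 1) A) * X v)
      = C (MvPolynomial.coeff (Finsupp.single v 1) A) * X v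
        + C (MvPolynomial.coeff (Finsupp.single v 1) A) * S.subst (X v) := by
    intro v hv
    obtain ⟨i, hi⟩ := Sum.isLeft_iff.mp (hx v hv)
    have hv2 : v = (Sum.inl i, v.2) := Prod.ext hi rfl
    rw [map_mul, rho_C, hv2, rho_X_inl, subst_X_inl, mul_add]
  have hsubstA : S.subst A = C (MvPolynomial.coeff 0 A)
      + ∑ v ∈ A.vars, C (MvPolynomial.coeff (Finsupp.single v 1) A) * S.subst (X v) := by
    conv_lhs => rw [hrep]
    rw [map_add, map_sum, subst_C]
    congr 1
    apply Finset.sum_congr rfl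
    intro v _
    rw [map_mul, subst_C]
  conv_lhs => rw [hrep]
  rw [map_add, map_sum, rho_C, Finset.sum_congr rfl h1, Finset.sum_add_distrib, hsubstA]
  linear_combination -hrep

lemma coeff0_Aal (S : Sys K n) (γ : Fin n → K) :
    MvPolynomial.coeff 0 (Aal S γ) = -(∑ i, γ i * S.a i) := by
  rw [Aal, MvPolynomial.coeff_sub, MvPolynomial.coeff_C, if_pos rfl]
  have h1 : MvPolynomial.coeff 0 (∑ i, C (γ i) * X ((Sum.inl i, 0) : Vr n)) = 0 := by
    rw [MvPolynomial.coeff_sum]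
    apply Finset.sum_eq_zero
    intro i _
    rw [MvPolynomial.coeff_C_mul, MvPolynomial.coeff_X', if_neg (single_ne_zero' _), mul_zero]
  rw [h1, zero_sub]

/-- the homogeneous linear polynomial attached to a kernel vector -/
noncomputable def Axv (γ : Fin n → K) : R K n := ∑ i, C (γ i) * X ((Sum.inl i, 0) : Vr n)

lemma cf_Axv (γ : Fin n → K) (i : Fin n) (m : ℕ) :
    cf (Axv γ) (Sum.inl i) m = if m = 0 then γ i else 0 := cf_sum_CX_inl γ 0 i m

lemma rho_Aal (S : Sys K n) (hN : S.Nn = 0) {γ : Fin n → K} (hγ : γ ∈ kerM S) :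
    rho S (Aal S γ) = Axv γ := by
  rw [rho_linear S (Aal_xOnly S γ) (Aal_linear S γ), subst_Aal S hN hγ, coeff0_Aal, Aal, Axv,
    map_neg]
  ring

lemma rank_of_dimfull (S : Sys K n) (hN : S.Nn = 0) (hDF : S.DimFull) :
    (Mc S).rank = n - 1 := by
  classical
  by_contra hrk
  obtain ⟨α, α', hαk, hα'k, hα0, hα'⟩ := ker2 S hrk
  obtain ⟨A, hA0, hAlin, hAxO, hiff⟩ := hDF
  -- A itself is in the implicit ideal
  have hmemA : S.memDiffSpanX A A := by
    refine ⟨hAxO, Ideal.subset_span ⟨0, ?_⟩⟩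
    rw [Function.iterate_zero_apply]
  have hsA : S.subst A = 0 := ((hiff A).mpr hmemA).2
  set c0 := MvPolynomial.coeff 0 A with hc0
  set Ax := A - C c0 with hAxdef
  have hAxlin : Ax.totalDegree ≤ 1 := by
    rw [hAxdef, sub_eq_add_neg]
    refine le_trans (MvPolynomial.totalDegree_add _ _) ?_
    rw [MvPolynomial.totalDegree_neg, MvPolynomial.totalDegree_C]
    simp only [sup_le_iff]
    exact ⟨hAlin, by omega⟩
  have hAxxO : xOnly Ax := by
    intro w hw
    rw [hAxdef, sub_eq_add_neg] at hw
    have h1 := MvPolynomial.vars_add_subset _ _ hw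
    rw [MvPolynomial.vars_neg, MvPolynomial.vars_C, Finset.union_empty] at h1
    exact hAxO w h1
  have hAx0 : MvPolynomial.coeff 0 Ax = 0 := by
    rw [hAxdef, MvPolynomial.coeff_sub, MvPolynomial.coeff_C, if_pos rfl, hc0, sub_self]
  have hAxne : Ax ≠ 0 := by
    intro hz
    have hA : A = C c0 := by
      rw [hAxdef] at hz
      exact sub_eq_zero.mp hz
    rw [hA, subst_C] at hsA
    apply hA0
    rw [hA, hsA]
  have hrhoA : rho S A = Ax := by
    rw [rho_linear S hAxO hAlin, hsA, hAxdef, hc0]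
    ring
  -- structure of Ax
  have hvars_ne : Ax.vars.Nonempty := by
    by_contra hv
    rw [Finset.not_nonempty_iff_eq_empty] at hv
    apply hAxne
    have := rep_linear Ax hAxlin
    rw [hAx0, hv, Finset.sum_empty, map_zero, add_zero] at this
    exact this
  have himg_ne : (Ax.vars.image Prod.snd).Nonempty := hvars_ne.image _
  set d := (Ax.vars.image Prod.snd).max' himg_ne with hd
  have hvle : ∀ v ∈ Ax.vars, v.2 ≤ d :=
    fun v hv => Finset.le_max' _ _ (Finset.mem_image_of_mem _ hv)
  obtain ⟨vstar, hvstar, hvstar2⟩ := Finset.mem_image.mp (Finset.max'_mem _ himg_ne)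
  rw [← hd] at hvstar2
  set βt : Fin n → K := fun i => MvPolynomial.coeff (Finsupp.single ((Sum.inl i, d) : Vr n) 1) Ax
    with hβt
  obtain ⟨istar, histar⟩ := Sum.isLeft_iff.mp (hAxxO vstar hvstar)
  have hβtne : βt istar ≠ 0 := by
    have hveq : vstar = (Sum.inl istar, d) := Prod.ext histar hvstar2
    simp only [hβt]
    rw [← hveq]
    exact coeff_single_ne_zero_of_mem_vars hAxlin hvstar
  -- representation with leading part at order d
  have hrep : Ax = (∑ i, C (βt i) * X ((Sum.inl i, d) : Vr n))
      + ∑ v ∈ Ax.vars.filter (fun v => ¬ v.2 = d),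
          C (MvPolynomial.coeff (Finsupp.single v 1) Ax) * X v := by
    have h0 := rep_linear Ax hAxlin
    rw [hAx0, map_zero, zero_add] at h0
    rw [← Finset.sum_filter_add_sum_filter_not Ax.vars (fun v => v.2 = d)] at h0
    have he : Function.Injective (fun i : Fin n => ((Sum.inl i, d) : Vr n)) := by
      intro a b h
      simpa using congrArg Prod.fst h
    rw [sum_reindex Ax _ _ he] at h0
    · exact h0
    · intro v hv
      obtain ⟨hv1, hv2⟩ := Finset.mem_filter.mp hv
      obtain ⟨i, hi⟩ := Sum.isLeft_iff.mp (hAxxO v hv1)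
      exact ⟨i, Prod.ext hi hv2⟩
    · intro z hz
      by_contra hc
      have hm : ((Sum.inl z, d) : Vr n) ∈ Ax.vars := mem_vars_of_coeff_single hc
      exact hz (Finset.mem_filter.mpr ⟨hm, rfl⟩)
  have hw0 : (∑ v ∈ Ax.vars.filter (fun v => ¬ v.2 = d),
      C (MvPolynomial.coeff (Finsupp.single v 1) Ax) * X v)
      ∈ BltX (K := K) (Sum.inl : Fin n → Fin n ⊕ Fin (n-1)) d := by
    apply Submodule.sum_mem
    intro v hv
    obtain ⟨hv1, hv2⟩ := Finset.mem_filter.mp hv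
    obtain ⟨i, hi⟩ := Sum.isLeft_iff.mp (hAxxO v hv1)
    have hvlt : v.2 < d := lt_of_le_of_ne (hvle v hv1) hv2
    rw [← MvPolynomial.smul_eq_C_mul]
    apply Submodule.smul_mem
    have hveq : v = (Sum.inl i, v.2) := Prod.ext hi rfl
    rw [hveq]
    exact mem_BltX_gen _ i hvlt
  have hDkAx : ∀ k, ∃ w ∈ BltX (K := K) (Sum.inl : Fin n → Fin n ⊕ Fin (n-1)) (d + k),
      (⇑S.D)^[k] Ax = (∑ i, C (βt i) * X ((Sum.inl i, d + k) : Vr n)) + w := by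
    intro k
    exact iterD S (fun i m => X ((Sum.inl i, m) : Vr n)) (fun i m => S.hD_X _ m)
      (BltX (Sum.inl : Fin n → Fin n ⊕ Fin (n-1))) (fun h => BltX_mono _ h)
      (fun z m u h => mem_BltX_gen _ z h) (fun hf => D_mem_BltX S hf)
      βt Finset.univ d hw0 hrep k
  have hDkhom : ∀ k, ((⇑S.D)^[k] Ax).IsHomogeneous 1 := by
    intro k
    obtain ⟨w, hw, heq⟩ := hDkAx k
    rw [← MvPolynomial.mem_homogeneousSubmodule, heq]
    apply Submodule.add_mem
    · rw [MvPolynomial.mem_homogeneousSubmodule]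
      exact isHomog_sum_CX _ _ _
    · exact BltX_homog _ _ hw
  have hcfDk : ∀ k i m, d + k ≤ m →
      cf ((⇑S.D)^[k] Ax) (Sum.inl i) m = if m = d + k then βt i else 0 := by
    intro k i m hm
    obtain ⟨w, hw, heq⟩ := hDkAx k
    rw [heq, cf_add, cf_BltX hw _ _ hm, add_zero, cf_sum_CX_inl]
  -- key step : every kernel vector is a multiple of βt
  have hkey : ∀ γ : Fin n → K, γ ∈ kerM S → ∃ t0 : K, ∀ i, γ i = t0 * βt i := by
    intro γ hγ
    have hmemg : S.memID (Aal S γ) := ⟨Aal_xOnly S γ, subst_Aal S hN hγ⟩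
    have hspan : Aal S γ ∈ Ideal.span {g | ∃ k, g = (⇑S.D)^[k] A} :=
      ((hiff (Aal S γ)).mp hmemg).2
    have hmap : rho S (Aal S γ) ∈ Ideal.map (rho S) (Ideal.span {g | ∃ k, g = (⇑S.D)^[k] A}) :=
      Ideal.mem_map_of_mem _ hspan
    rw [Ideal.map_span] at hmap
    have hset : ⇑(rho S) '' {g | ∃ k, g = (⇑S.D)^[k] A} = {g | ∃ k, g = (⇑S.D)^[k] Ax} := by
      ext g
      constructor
      · rintro ⟨g0, ⟨k, rfl⟩, rfl⟩
        exact ⟨k, by rw [rho_comm_D, hrhoA]⟩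
      · rintro ⟨k, rfl⟩
        exact ⟨(⇑S.D)^[k] A, ⟨k, rfl⟩, by rw [rho_comm_D, hrhoA]⟩
    rw [hset, rho_Aal S hN hγ] at hmap
    -- project to the degree-one component
    obtain ⟨cR, hsupp, hsum⟩ := Submodule.mem_span_set.mp hmap
    have hproj : Axv γ = cR.sum fun mi r => C (MvPolynomial.coeff 0 r) * mi := by
      have h1 : (MvPolynomial.homogeneousComponent 1) (Axv γ) = Axv γ :=
        hcomp_self (isHomog_sum_CX _ _ _)
      rw [← h1, ← hsum, map_finsuppSum]
      rw [Finsupp.sum, Finsupp.sum]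
      apply Finset.sum_congr rfl
      intro mi hmi
      obtain ⟨k, rfl⟩ := hsupp hmi
      rw [smul_eq_mul, hcomp_mul _ _ (hDkhom k)]
    have hmem2 : Axv γ ∈ Submodule.span K (Set.range (fun k => (⇑S.D)^[k] Ax)) := by
      rw [hproj, Finsupp.sum]
      apply Submodule.sum_mem
      intro mi hmi
      obtain ⟨k, hk⟩ := hsupp hmi
      rw [← MvPolynomial.smul_eq_C_mul]
      apply Submodule.smul_mem
      exact Submodule.subset_span ⟨k, hk.symm⟩
    obtain ⟨t, ht⟩ := Finsupp.mem_span_range_iff_exists_finsupp.mp hmem2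
    by_cases ht0 : t = 0
    · refine ⟨0, fun i => ?_⟩
      rw [ht0] at ht
      simp only [Finsupp.sum_zero_index] at ht
      have := congrArg (fun f => cf f (Sum.inl i) 0) ht.symm
      simp only [cf_zero] at this
      rw [cf_Axv, if_pos rfl] at this
      rw [this, zero_mul]
    · have hsne : t.support.Nonempty := Finsupp.support_nonempty_iff.mpr ht0
      set km := t.support.max' hsne with hkm
      have hkmmem : km ∈ t.support := Finset.max'_mem _ _
      have hcfeq : ∀ i m, (∑ k ∈ t.support, t k * cf ((⇑S.D)^[k] Ax) (Sum.inl i) m)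
          = cf (Axv γ) (Sum.inl i) m := by
        intro i m
        have := congrArg (fun f => cf f (Sum.inl i) m) ht
        rw [← this, Finsupp.sum, cf_sum]
        apply Finset.sum_congr rfl
        intro k _
        rw [cf_smul]
      have hdkm : d + km = 0 := by
        by_contra hne
        have h1 := hcfeq istar (d + km)
        have h2 : ∀ k ∈ t.support, t k * cf ((⇑S.D)^[k] Ax) (Sum.inl istar) (d + km)
            = if k = km then t k * βt istar else 0 := by
          intro k hk
          have hkle : k ≤ km := Finset.le_max' _ _ hk
          by_cases hkeq : k = km
          · rw [if_pos hkeq, hkeq, hcfDk km istar (d + km) (le_refl _), if_pos rfl]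
          · have : d + km ≠ d + k := by
              intro hc
              exact hkeq (by omega)
            rw [if_neg hkeq, hcfDk k istar (d + km) (by omega), if_neg this, mul_zero]
        rw [Finset.sum_congr rfl h2, Finset.sum_ite_eq' t.support km] at h1
        rw [if_pos hkmmem, cf_Axv, if_neg hne] at h1
        have : t km = 0 := by
          rcases mul_eq_zero.mp h1 with h | h
          · exact h
          · exact absurd h hβtne
        exact (Finsupp.mem_support_iff.mp hkmmem) this
      have hd0 : d = 0 := by omega
      have hkm0 : km = 0 := by omega
      refine ⟨t 0, fun i => ?_⟩
      have h1 := hcfeq i 0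
      have hsub : t.support ⊆ {0} := by
        intro k hk
        have := Finset.le_max' _ _ hk
        rw [← hkm, hkm0] at this
        simpa using Nat.le_zero.mp this
      have h2 : (∑ k ∈ t.support, t k * cf ((⇑S.D)^[k] Ax) (Sum.inl i) 0)
          = t 0 * βt i := by
        rcases Finset.subset_singleton_iff.mp hsub with h | h
        · rw [h, Finset.sum_empty]
          have ht00 : t 0 = 0 := by
            by_contra hc
            have : (0 : ℕ) ∈ t.support := Finsupp.mem_support_iff.mpr hc
            rw [h] at this
            simp at this
          rw [ht00, zero_mul]
        · rw [h, Finset.sum_singleton, Function.iterate_zero_apply]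
          have : cf Ax (Sum.inl i) 0 = βt i := by
            have := hcfDk 0 i 0 (by omega)
            rw [Function.iterate_zero_apply, if_pos (by omega)] at this
            exact this
          rw [this]
      rw [h2, cf_Axv, if_pos rfl] at h1
      exact h1.symm
  -- contradiction with the two independent kernel vectors
  obtain ⟨t1, ht1⟩ := hkey α hαk
  obtain ⟨t2, ht2⟩ := hkey α' hα'k
  have ht1ne : t1 ≠ 0 := by
    intro hz
    apply hα0
    funext i
    rw [ht1 i, hz, zero_mul]
    rfl
  apply hα' (t2 * t1⁻¹)
  funext i
  rw [Pi.smul_apply, smul_eq_mul, ht1 i, ht2 i]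
  field_simp
end Aux
namespace Aux
variable {K : Type} [Field K] {n : ℕ}

lemma Smat_rank (S : Sys K n) (hN : S.Nn = 0) : S.Smat.rank = (Mc S).rank := by
  rw [Smat_eq S hN]
  have h1 : (Matrix.of fun i j => Mc S i (Fin.rev j))
      = (Mc S).submatrix id ⇑(Fin.revPerm (n := n - 1)) := by
    ext i j
    rw [Matrix.submatrix_apply, Fin.revPerm_apply]
    rfl
  rw [h1, rank_submatrix_col]

end Aux

/-- Suppose `N = 0`, i.e. every `Fᵢ` has order `0`. Then the implicit
ideal `ID` of `𝒫(X,U)` has dimension `n - 1` if and only if the leading matrix `S` has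
rank `n - 1`. -/
theorem statement_1 {K : Type} [Field K] {n : ℕ} (S : Sys K n) (hN : S.Nn = 0) :
    S.DimFull ↔ S.Smat.rank = n - 1 := by
  constructor
  · intro h
    rw [Aux.Smat_rank S hN]
    exact Aux.rank_of_dimfull S hN h
  · intro h
    rw [Aux.Smat_rank S hN] at h
    exact Aux.dimfull_of_rank S hN h

end DPPE
end

section
/- Let A be a nonzero linear ID-primitive differential polynomial in (G₀) with |G₀| = c(A) + 1. Then for j = 0,1,…,c(A) there exist differential operators 𝓓_j ∈ K[∂] with deg(𝓓_j) = j such that G₀ = {B_0 = 𝓓_0(A), B_1 = 𝓓_1(A), …, B_{c(A)} = 𝓓_{c(A)}(A)}. -/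
open MvPolynomial

namespace DPPE

variable {K : Type} [Field K] {n : ℕ}

section AuxLinear

variable {K : Type} [Field K] {n : ℕ}

theorem cf_add (f g : R K n) (v : Fin n ⊕ Fin (n-1)) (k : ℕ) :
    cf (f + g) v k = cf f v k + cf g v k := coeff_add _ _ _

theorem cf_C_mul (c : K) (f : R K n) (v : Fin n ⊕ Fin (n-1)) (k : ℕ) :
    cf (C c * f) v k = c * cf f v k := coeff_C_mul _ _ _

theorem cf_C (c : K) (v : Fin n ⊕ Fin (n-1)) (k : ℕ) : cf (C c : R K n) v k = 0 := by
  classical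
  rw [cf, coeff_C, if_neg]
  intro h
  have := congrArg (fun m : Vr n →₀ ℕ => m (v, k)) h
  simp at this

theorem cf_X (w : Vr n) (v : Fin n ⊕ Fin (n-1)) (k : ℕ) :
    cf (X w : R K n) v k = if w = (v, k) then 1 else 0 := by
  classical
  rw [cf, coeff_X']
  by_cases h : w = (v, k)
  · simp [h]
  · rw [if_neg (fun hs => h (Finsupp.single_left_injective one_ne_zero hs)), if_neg h]

theorem mem_vars_of_cf {f : R K n} {v : Fin n ⊕ Fin (n-1)} {k : ℕ} (h : cf f v k ≠ 0) :
    (v, k) ∈ f.vars := by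
  classical
  rw [mem_vars]
  exact ⟨Finsupp.single (v, k) 1, mem_support_iff.2 h, by simp⟩

theorem cf_eq_zero_of_not_mem_vars {f : R K n} {v : Fin n ⊕ Fin (n-1)} {k : ℕ}
    (h : (v, k) ∉ f.vars) : cf f v k = 0 := by
  by_contra hc; exact h (mem_vars_of_cf hc)

theorem mono_classify {f : R K n} (hf : IsLinearPoly f) {m : Vr n →₀ ℕ}
    (hm : m ∈ f.support) : m = 0 ∨ ∃ w, m = Finsupp.single w 1 := by
  classical
  have hd : (m.sum fun _ e => e) ≤ 1 := le_trans (le_totalDegree hm) hf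
  by_cases h0 : m = 0
  · exact Or.inl h0
  · right
    obtain ⟨w, hw⟩ := Finsupp.support_nonempty_iff.2 h0
    refine ⟨w, ?_⟩
    have hw1 : 1 ≤ m w := Nat.one_le_iff_ne_zero.2 (Finsupp.mem_support_iff.1 hw)
    ext w'
    by_cases hww : w' = w
    · subst hww
      have h1 : m w' ≤ m.sum fun _ e => e :=
        Finset.single_le_sum (f := fun x => m x) (fun _ _ => Nat.zero_le _) hw
      simp only [Finsupp.single_eq_same]
      omega
    · rw [Finsupp.single_eq_of_ne' (fun hh => hww hh.symm)]
      by_contra hne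
      have hw' : w' ∈ m.support := Finsupp.mem_support_iff.2 hne
      have hw'1 : 1 ≤ m w' := Nat.one_le_iff_ne_zero.2 hne
      have h2 : m w' + m w ≤ m.sum fun _ e => e :=
        Finset.add_le_sum (f := fun x => m x) (fun _ _ => Nat.zero_le _) hw' hw hww
      omega

theorem cf_ne_zero_of_mem_vars {f : R K n} (hf : IsLinearPoly f) {w : Vr n}
    (h : w ∈ f.vars) : cf f w.1 w.2 ≠ 0 := by
  classical
  rw [mem_vars] at h
  obtain ⟨m, hm, hwm⟩ := h
  rcases mono_classify hf hm with h0 | ⟨w', hw'⟩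
  · subst h0; simp at hwm
  · subst hw'
    have : w = w' := by
      have := Finsupp.mem_support_iff.1 hwm
      by_contra hne
      rw [Finsupp.single_eq_of_ne' (fun hh => hne hh.symm)] at this
      exact this rfl
    subst this
    simpa [cf] using mem_support_iff.1 hm

theorem linear_decomp {f : R K n} (hf : IsLinearPoly f) :
    f = C (constantCoeff f) + ∑ w ∈ f.vars, C (cf f w.1 w.2) * X w := by
  classical
  conv_lhs => rw [f.as_sum]
  have hsub : f.support ⊆ insert 0 (f.support.erase 0) := by
    intro m hm
    by_cases h0 : m = 0
    · simp [h0]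
    · exact Finset.mem_insert_of_mem (Finset.mem_erase.2 ⟨h0, hm⟩)
  rw [Finset.sum_subset hsub (by
    intro m _ hnm
    rw [mem_support_iff, not_not] at hnm
    rw [hnm, monomial_zero])]
  rw [Finset.sum_insert (Finset.notMem_erase 0 _)]
  congr 1
  · refine (Finset.sum_bij (fun (w : Vr n) (_ : w ∈ f.vars) => Finsupp.single w 1)
      ?_ ?_ ?_ ?_).symm
    · intro w hw
      refine Finset.mem_erase.2 ⟨by simp [Finsupp.single_eq_zero], mem_support_iff.2 ?_⟩
      have := cf_ne_zero_of_mem_vars hf hw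
      rwa [cf] at this
    · intro w _ w' _ h
      exact Finsupp.single_left_injective one_ne_zero h
    · intro m hm
      obtain ⟨hm0, hms⟩ := Finset.mem_erase.1 hm
      rcases mono_classify hf hms with h0 | ⟨w', hw'⟩
      · exact absurd h0 hm0
      · refine ⟨w', (mem_vars w').2 ⟨m, hms, by simp [hw']⟩, hw'.symm⟩
    · intro w hw
      rw [X, C_mul_monomial, mul_one]
      rfl

end AuxLinear


section AuxOrder

variable {K : Type} [Field K] {n : ℕ}

theorem ord_le_ordTot {f : R K n} {w : Vr n} (h : w ∈ f.vars) : w.2 ≤ ordTot f := by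
  classical
  have h1 := Finset.le_max (Finset.mem_image_of_mem Prod.snd h)
  unfold ordTot
  cases hM : (f.vars.image Prod.snd).max with
  | bot => rw [hM] at h1; exact absurd h1 (by simp)
  | coe m =>
    rw [hM] at h1
    simpa using h1

theorem grid_le {k k' r r' m : ℕ} (hr : r < m)
    (h : k < k' ∨ (k = k' ∧ r ≤ r')) : k * m + r ≤ k' * m + r' := by
  rcases h with h | ⟨rfl, h⟩
  · calc k * m + r ≤ k * m + m := by omega
      _ = (k + 1) * m := by ring
      _ ≤ k' * m := Nat.mul_le_mul_right m h
      _ ≤ k' * m + r' := Nat.le_add_right _ _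
  · omega

theorem grid_ge {k k' r r' m : ℕ} (hr' : r' < m)
    (h : k' < k ∨ (k = k' ∧ r' < r)) : k' * m + r' < k * m + r := by
  rcases h with h | ⟨rfl, h⟩
  · calc k' * m + r' < k' * m + m := by omega
      _ = (k' + 1) * m := by ring
      _ ≤ k * m := Nat.mul_le_mul_right m h
      _ ≤ k * m + r := Nat.le_add_right _ _
  · omega

theorem rkk_le_inl_iff {i i' : Fin n} {k k' : ℕ} :
    rkk (n := n) (Sum.inl i, k) ≤ rkk (Sum.inl i', k') ↔
      k < k' ∨ (k = k' ∧ (i.rev : ℕ) ≤ (i'.rev : ℕ)) := by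
  show toLex ((false, toLex (k, (i.rev : ℕ)))) ≤ toLex ((false, toLex (k', (i'.rev : ℕ)))) ↔ _
  rw [Prod.Lex.le_iff]
  simp [Prod.Lex.le_iff]

theorem not_rkk_inr_le_inl {j : Fin (n-1)} {i : Fin n} {k m : ℕ} :
    ¬ rkk (n := n) (Sum.inr j, m) ≤ rkk (Sum.inl i, k) := by
  show ¬ toLex ((true, toLex (m, (j : ℕ)))) ≤ toLex ((false, toLex (k, (i.rev : ℕ))))
  rw [Prod.Lex.le_iff]
  simp

theorem rkk_inl (i : Fin n) (k : ℕ) :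
    rkk (n := n) (Sum.inl i, k) = toLex (false, toLex (k, (i.rev : ℕ))) := rfl

theorem rkk_inr (j : Fin (n-1)) (k : ℕ) :
    rkk (n := n) (Sum.inr j, k) = toLex (true, toLex (k, (j : ℕ))) := rfl

theorem rkk_injective : Function.Injective (rkk (n := n)) := by
  rintro ⟨v, k⟩ ⟨v', k'⟩ h
  cases v with
  | inl i =>
    cases v' with
    | inl i' =>
      rw [rkk_inl, rkk_inl, toLex_inj, Prod.mk.injEq, toLex_inj, Prod.mk.injEq] at h
      obtain ⟨-, hk, hr⟩ := h
      exact Prod.ext (congrArg Sum.inl (Fin.rev_injective (Fin.val_injective hr))) hk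
    | inr j =>
      rw [rkk_inl, rkk_inr, toLex_inj, Prod.mk.injEq] at h
      exact absurd h.1 (by simp)
  | inr j =>
    cases v' with
    | inl i' =>
      rw [rkk_inr, rkk_inl, toLex_inj, Prod.mk.injEq] at h
      exact absurd h.1 (by simp)
    | inr j' =>
      rw [rkk_inr, rkk_inr, toLex_inj, Prod.mk.injEq, toLex_inj, Prod.mk.injEq] at h
      obtain ⟨-, hk, hr⟩ := h
      exact Prod.ext (congrArg Sum.inr (Fin.val_injective hr)) hk

/-- A numerical measure realizing the ranking on the `X`-variables. -/
def eM {n : ℕ} (w : Vr n) : ℕ :=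
  w.2 * n + Sum.elim (fun i : Fin n => (i.rev : ℕ)) (fun j : Fin (n-1) => (j : ℕ)) w.1

theorem eM_lt_of_rkk_lt {i i' : Fin n} {k k' : ℕ}
    (h : rkk (n := n) (Sum.inl i, k) < rkk (Sum.inl i', k')) :
    eM (n := n) (Sum.inl i, k) < eM (n := n) (Sum.inl i', k') := by
  have hle := rkk_le_inl_iff.1 (le_of_lt h)
  have hne : ¬ ((Sum.inl i : Fin n ⊕ Fin (n-1)), k) = (Sum.inl i', k') :=
    fun he => absurd (he ▸ h) (lt_irrefl _)
  show k * n + (i.rev : ℕ) < k' * n + (i'.rev : ℕ)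
  apply grid_ge i.rev.isLt
  rcases hle with h1 | ⟨rfl, h2⟩
  · exact Or.inl h1
  · rcases lt_or_eq_of_le h2 with h3 | h3
    · exact Or.inr ⟨rfl, h3⟩
    · exact (hne (Prod.ext (congrArg Sum.inl (Fin.rev_injective (Fin.val_injective h3))) rfl)).elim

theorem isLead_unique {f : R K n} {v v' : Vr n} (h : IsLead f v) (h' : IsLead f v') :
    v = v' :=
  rkk_injective (le_antisymm (h'.2 v h.1) (h.2 v' h'.1))

theorem lin_add {f g : R K n} (hf : IsLinearPoly f) (hg : IsLinearPoly g) :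
    IsLinearPoly (f + g) :=
  le_trans (totalDegree_add f g) (max_le hf hg)

theorem lin_C_mul {f : R K n} (c : K) (hf : IsLinearPoly f) : IsLinearPoly (C c * f) :=
  le_trans (totalDegree_mul _ _) (by simpa [totalDegree_C, IsLinearPoly] using hf)

theorem lin_neg {f : R K n} (hf : IsLinearPoly f) : IsLinearPoly (-f) := by
  unfold IsLinearPoly at *; rwa [totalDegree_neg]

theorem lin_sub {f g : R K n} (hf : IsLinearPoly f) (hg : IsLinearPoly g) :
    IsLinearPoly (f - g) := by
  rw [sub_eq_add_neg]; exact lin_add hf (lin_neg hg)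

theorem lin_zero : IsLinearPoly (0 : R K n) := by
  unfold IsLinearPoly; simp

theorem lin_C (c : K) : IsLinearPoly (C c : R K n) := by
  unfold IsLinearPoly; simp [totalDegree_C]

theorem lin_X (w : Vr n) : IsLinearPoly (X w : R K n) := le_of_eq (totalDegree_X w)

theorem lin_sum {α : Type*} (s : Finset α) (F : α → R K n)
    (h : ∀ a ∈ s, IsLinearPoly (F a)) : IsLinearPoly (∑ a ∈ s, F a) :=
  Finset.sum_induction F IsLinearPoly (fun _ _ => lin_add) lin_zero h

theorem xOnly_add {f g : R K n} (hf : xOnly f) (hg : xOnly g) : xOnly (f + g) := by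
  intro w hw
  rcases Finset.mem_union.1 (vars_add_subset f g hw) with h | h
  exacts [hf w h, hg w h]

theorem xOnly_C_mul {f : R K n} (c : K) (hf : xOnly f) : xOnly (C c * f) := by
  intro w hw
  rcases Finset.mem_union.1 (vars_mul _ _ hw) with h | h
  · rw [vars_C] at h; exact absurd h (Finset.notMem_empty w)
  · exact hf w h

theorem xOnly_neg {f : R K n} (hf : xOnly f) : xOnly (-f) := by
  intro w hw; rw [vars_neg] at hw; exact hf w hw

theorem xOnly_sub {f g : R K n} (hf : xOnly f) (hg : xOnly g) : xOnly (f - g) := by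
  rw [sub_eq_add_neg]; exact xOnly_add hf (xOnly_neg hg)

theorem xOnly_C (c : K) : xOnly (C c : R K n) := by
  intro w hw; rw [vars_C] at hw; exact absurd hw (Finset.notMem_empty w)

theorem xOnly_zero : xOnly (0 : R K n) := by
  intro w hw; simp [vars_0] at hw

theorem xOnly_sum {α : Type*} (s : Finset α) (F : α → R K n)
    (h : ∀ a ∈ s, xOnly (F a)) : xOnly (∑ a ∈ s, F a) :=
  Finset.sum_induction F xOnly (fun _ _ => xOnly_add) xOnly_zero h

theorem linear_decomp_grid {f : R K n} (hf : IsLinearPoly f) (hx : xOnly f) {M : ℕ}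
    (hM : ordTot f ≤ M) :
    f = C (constantCoeff f) + ∑ i : Fin n, ∑ k ∈ Finset.range (M + 1),
      C (cf f (Sum.inl i) k) * X (Sum.inl i, k) := by
  classical
  conv_lhs => rw [linear_decomp hf]
  congr 1
  set V : Finset (Vr n) :=
    (Finset.univ ×ˢ Finset.range (M + 1)).image
      (fun p : Fin n × ℕ => ((Sum.inl p.1 : Fin n ⊕ Fin (n-1)), p.2)) with hV
  have hsub : f.vars ⊆ V := by
    intro w hw
    obtain ⟨i, hi⟩ := Sum.isLeft_iff.1 (hx w hw)
    refine Finset.mem_image.2 ⟨(i, w.2), ?_, ?_⟩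
    · refine Finset.mem_product.2 ⟨Finset.mem_univ _, Finset.mem_range.2 ?_⟩
      have := ord_le_ordTot hw; omega
    · simp [← hi]
  rw [Finset.sum_subset hsub (by
    intro w _ hnw
    rw [cf_eq_zero_of_not_mem_vars hnw, map_zero, zero_mul])]
  rw [hV, Finset.sum_image (by intro p _ q _ h; simpa [Prod.ext_iff] using h)]
  rw [← Finset.sum_product']

end AuxOrder


section AuxSpan

variable {K : Type} [Field K] {n : ℕ}

theorem cf_sub (f g : R K n) (v : Fin n ⊕ Fin (n-1)) (k : ℕ) :
    cf (f - g) v k = cf f v k - cf g v k := by simp [cf, MvPolynomial.coeff_sub]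

theorem xOnly_of_isLead {g : R K n} {i : Fin n} {k : ℕ}
    (h : IsLead g (Sum.inl i, k)) : xOnly g := by
  rintro ⟨wv, wk⟩ hw
  cases wv with
  | inl i' => simp
  | inr j => exact absurd (h.2 _ hw) not_rkk_inr_le_inl

theorem inXV_sub (S : Sys K n) {f g : R K n} (hf : S.inXV f) (hg : S.inXV g) :
    S.inXV (f - g) := by
  intro w hw
  rcases Finset.mem_union.1 (vars_sub_subset (p := f) (q := g) hw) with h | h
  exacts [hf w h, hg w h]

theorem inXV_C_mul (S : Sys K n) (c : K) {g : R K n} (hg : S.inXV g) :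
    S.inXV (C c * g) := by
  intro w hw
  rcases Finset.mem_union.1 (vars_mul _ _ hw) with h | h
  · rw [vars_C] at h; exact absurd h (Finset.notMem_empty w)
  · exact hg w h

theorem mem_G0 {G : Finset (R K n)} {g : R K n} (hgG : g ∈ G) (hx : xOnly g) :
    g ∈ G0 G := by
  unfold G0
  exact (@Finset.mem_filter _ _ (Classical.decPred _) _ _).2 ⟨hgG, hx⟩

theorem span_G0 (S : Sys K n) {G : Finset (R K n)} (hG : S.IsAssocGB G) :
    ∀ N f, f.vars.sup eM < N → f ∈ Ideal.span S.PSset → S.inXV f → IsLinearPoly f →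
      xOnly f → f ∈ Submodule.span K ((G0 G : Finset (R K n)) : Set (R K n)) := by
  intro N
  induction N using Nat.strong_induction_on with
  | _ N IH =>
    intro f hm hfI hfXV hflin hfx
    by_cases hf0 : f = 0
    · simp [hf0]
    obtain ⟨g, hgG, v, hglead, hflead⟩ := hG.2.2.2 f hfI hfXV hflin hf0
    obtain ⟨vi, vk⟩ := v
    have hvl := hfx _ hflead.1
    obtain ⟨i, rfl⟩ : ∃ i, vi = Sum.inl i := by
      cases vi with
      | inl i => exact ⟨i, rfl⟩
      | inr j => simp at hvl
    have hgprop := hG.1 g hgG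
    have hgx : xOnly g := xOnly_of_isLead hglead
    have hgmem : g ∈ G0 G := mem_G0 hgG hgx
    obtain ⟨v₃, hgl₃, hmon, _⟩ := hG.2.2.1 g hgG
    have hv₃ : v₃ = (Sum.inl i, vk) := isLead_unique hgl₃ hglead
    set c : K := cf f (Sum.inl i) vk with hc
    set f' : R K n := f - C c * g with hf'
    have lin' : IsLinearPoly f' := lin_sub hflin (lin_C_mul c hgprop.2.1)
    have x' : xOnly f' := xOnly_sub hfx (xOnly_C_mul c hgx)
    have XV' : S.inXV f' := inXV_sub S hfXV (inXV_C_mul S c hgprop.2.2.1)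
    have I' : f' ∈ Ideal.span S.PSset :=
      Submodule.sub_mem _ hfI (Ideal.mul_mem_left _ _ hgprop.2.2.2)
    have hcf' : cf f' (Sum.inl i) vk = 0 := by
      rw [hf', cf_sub, cf_C_mul]
      rw [hv₃] at hmon
      rw [hmon, mul_one, sub_self]
    have hbound : ∀ w ∈ f'.vars, eM w < eM (n := n) (Sum.inl i, vk) := by
      intro w hw
      have hwle : rkk w ≤ rkk (n := n) (Sum.inl i, vk) := by
        rcases Finset.mem_union.1 (vars_sub_subset (p := f) (q := C c * g) hw) with h | h
        · exact hflead.2 w h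
        · rcases Finset.mem_union.1 (vars_mul _ _ h) with h2 | h2
          · rw [vars_C] at h2; exact absurd h2 (Finset.notMem_empty w)
          · exact hglead.2 w h2
      have hwne : w ≠ (Sum.inl i, vk) := by
        intro he
        rw [he] at hw
        exact cf_ne_zero_of_mem_vars lin' hw hcf'
      obtain ⟨i', k'⟩ := w
      obtain ⟨i'', rfl⟩ : ∃ i'', i' = Sum.inl i'' := by
        have := x' _ hw
        cases i' with
        | inl a => exact ⟨a, rfl⟩
        | inr b => simp at this
      exact eM_lt_of_rkk_lt (lt_of_le_of_ne hwle (fun hh => hwne (rkk_injective hh)))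
    by_cases hf'0 : f' = 0
    · have hfeq : f = C c * g := by
        have := sub_eq_zero.1 hf'0
        exact this
      rw [hfeq, ← smul_eq_C_mul]
      exact Submodule.smul_mem _ _ (Submodule.subset_span (Finset.mem_coe.2 hgmem))
    rcases Finset.eq_empty_or_nonempty f'.vars with hfe' | hfne'
    · obtain ⟨g', _, v', _, hfl'⟩ := hG.2.2.2 f' I' XV' lin' hf'0
      exact absurd (hfe' ▸ hfl'.1) (Finset.notMem_empty v')
    · have hvmem : eM (n := n) (Sum.inl i, vk) ≤ f.vars.sup eM := Finset.le_sup hflead.1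
      have hpos : (⊥ : ℕ) < eM (n := n) (Sum.inl i, vk) := by
        obtain ⟨w0, hw0⟩ := hfne'
        exact lt_of_le_of_lt (Nat.zero_le _) (hbound w0 hw0)
      have hsup' : f'.vars.sup eM < eM (n := n) (Sum.inl i, vk) :=
        (Finset.sup_lt_iff hpos).2 hbound
      have hrec := IH (eM (n := n) (Sum.inl i, vk)) (lt_of_le_of_lt hvmem hm) f'
        hsup' I' XV' lin' x'
      have hfeq : f = f' + C c * g := by rw [hf']; ring
      rw [hfeq, ← smul_eq_C_mul]
      exact Submodule.add_mem _ hrec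
        (Submodule.smul_mem _ _ (Submodule.subset_span (Finset.mem_coe.2 hgmem)))

end AuxSpan


section AuxSubst

variable {K : Type} [Field K] {n : ℕ}

theorem D_iter_add (S : Sys K n) (k : ℕ) (p q : R K n) :
    (⇑S.D)^[k] (p + q) = (⇑S.D)^[k] p + (⇑S.D)^[k] q := by
  induction k generalizing p q with
  | zero => rfl
  | succ k ih => rw [Function.iterate_succ_apply, Function.iterate_succ_apply,
      Function.iterate_succ_apply, map_add, ih]

theorem D_iter_zero (S : Sys K n) (k : ℕ) : (⇑S.D)^[k] (0 : R K n) = 0 := by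
  induction k with
  | zero => rfl
  | succ k ih => rw [Function.iterate_succ_apply, map_zero, ih]

theorem D_iter_neg (S : Sys K n) (k : ℕ) (p : R K n) :
    (⇑S.D)^[k] (-p) = -(⇑S.D)^[k] p := by
  induction k generalizing p with
  | zero => rfl
  | succ k ih => rw [Function.iterate_succ_apply, Function.iterate_succ_apply, map_neg, ih]

theorem D_iter_X0 (S : Sys K n) (v : Fin n ⊕ Fin (n-1)) (k : ℕ) :
    (⇑S.D)^[k] (X (v, 0) : R K n) = X (v, k) := by
  induction k with
  | zero => rfl
  | succ k ih => rw [Function.iterate_succ_apply', ih, S.hD_X]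

theorem subst_C (S : Sys K n) (c : K) : S.subst (C c) = C c := by
  unfold Sys.subst
  rw [← MvPolynomial.algebraMap_eq, AlgHom.commutes, MvPolynomial.algebraMap_eq]

theorem subst_X_inl (S : Sys K n) (i : Fin n) (k : ℕ) :
    S.subst (X (Sum.inl i, k)) = (⇑S.D)^[k] (C (S.a i) - S.H i) := by
  unfold Sys.subst
  rw [aeval_X]
  rfl

theorem subst_X_inr (S : Sys K n) (j : Fin (n-1)) (k : ℕ) :
    S.subst (X (Sum.inr j, k)) = X (Sum.inr j, k) := by
  unfold Sys.subst
  rw [aeval_X]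
  rfl

theorem D_X_pair (S : Sys K n) (w : Vr n) : S.D (X w) = X (w.1, w.2 + 1) := by
  obtain ⟨v, k⟩ := w
  exact S.hD_X v k

theorem subst_D (S : Sys K n) (p : R K n) : S.subst (S.D p) = S.D (S.subst p) := by
  induction p using MvPolynomial.induction_on with
  | C c => rw [S.hD_C, subst_C, subst_C, S.hD_C]
  | add p q hp hq => rw [map_add, map_add, map_add, map_add, hp, hq]
  | mul_X p w hp =>
    have hX : S.subst (S.D (X w)) = S.D (S.subst (X w)) := by
      rw [D_X_pair]
      obtain ⟨v, k⟩ := w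
      cases v with
      | inl i => rw [subst_X_inl, subst_X_inl, Function.iterate_succ_apply']
      | inr j =>
        rw [subst_X_inr, subst_X_inr]
        exact (S.hD_X (Sum.inr j) k).symm
    conv_lhs => rw [S.D.leibniz]
    conv_rhs => rw [map_mul, S.D.leibniz]
    rw [smul_eq_mul, smul_eq_mul, smul_eq_mul, smul_eq_mul, map_add, map_mul, map_mul, hp, hX]

theorem subst_D_iter (S : Sys K n) (k : ℕ) (p : R K n) :
    S.subst ((⇑S.D)^[k] p) = (⇑S.D)^[k] (S.subst p) := by
  induction k generalizing p with
  | zero => rfl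
  | succ k ih => rw [Function.iterate_succ_apply', Function.iterate_succ_apply',
      subst_D, ih]

theorem subst_uOnly_linear (S : Sys K n) {f : R K n} (hl : IsLinearPoly f)
    (hu : uOnly f) : S.subst f = f := by
  conv_lhs => rw [linear_decomp hl]
  conv_rhs => rw [linear_decomp hl]
  rw [map_add, map_sum, subst_C]
  congr 1
  refine Finset.sum_congr rfl ?_
  intro w hw
  rw [map_mul, subst_C]
  obtain ⟨v, k⟩ := w
  cases v with
  | inl i => exact absurd (hu _ hw) (by simp)
  | inr j => rw [subst_X_inr]

theorem lin_H (S : Sys K n) (i : Fin n) : IsLinearPoly (S.H i) :=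
  (S.H_hom i).totalDegree_le

theorem subst_F (S : Sys K n) (i : Fin n) : S.subst (S.F i) = 0 := by
  unfold Sys.F
  rw [map_add, map_sub, subst_C, subst_X_inl, subst_uOnly_linear S (lin_H S i) (S.H_u i)]
  rw [Function.iterate_zero_apply]
  ring

theorem subst_span (S : Sys K n) {f : R K n} (h : f ∈ Ideal.span S.PSset) :
    S.subst f = 0 := by
  have hker : Ideal.span S.PSset ≤ RingHom.ker (S.subst : R K n →+* R K n) := by
    rw [Ideal.span_le]
    rintro g ⟨i, k, -, rfl⟩
    rw [SetLike.mem_coe, RingHom.mem_ker]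
    show S.subst ((⇑S.D)^[k] (S.F i)) = 0
    rw [subst_D_iter, subst_F, D_iter_zero]
  have := hker h
  rwa [RingHom.mem_ker] at this

theorem key_ident (S : Sys K n) {f : R K n} (hl : IsLinearPoly f) (hx : xOnly f)
    (hs : S.subst f = 0) {M : ℕ} (hM : ordTot f ≤ M) :
    f = ∑ i, ∑ k ∈ Finset.range (M+1), C (cf f (Sum.inl i) k) * (⇑S.D)^[k] (S.F i) := by
  have hF : ∀ (i : Fin n) (k : ℕ),
      (⇑S.D)^[k] (S.F i) = X (Sum.inl i, k) + (⇑S.D)^[k] (S.H i - C (S.a i)) := by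
    intro i k
    have hFi : S.F i = X (Sum.inl i, 0) + (S.H i - C (S.a i)) := by unfold Sys.F; ring
    rw [hFi, D_iter_add, D_iter_X0]
  have hdec := linear_decomp_grid hl hx hM
  have hsub : (0 : R K n) = C (constantCoeff f) + ∑ i, ∑ k ∈ Finset.range (M+1),
      C (cf f (Sum.inl i) k) * (⇑S.D)^[k] (C (S.a i) - S.H i) := by
    calc (0 : R K n) = S.subst f := hs.symm
    _ = _ := by
        conv_lhs => rw [hdec]
        rw [map_add, subst_C, map_sum]
        congr 1
        refine Finset.sum_congr rfl fun i _ => ?_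
        rw [map_sum]
        refine Finset.sum_congr rfl fun k _ => ?_
        rw [map_mul, subst_C, subst_X_inl]
  have hrw : ∀ (i : Fin n) (k : ℕ),
      (⇑S.D)^[k] (S.H i - C (S.a i)) = -((⇑S.D)^[k] (C (S.a i) - S.H i)) := by
    intro i k
    rw [← D_iter_neg]
    congr 1
    ring
  set T1 := ∑ i, ∑ k ∈ Finset.range (M+1), C (cf f (Sum.inl i) k) * X (Sum.inl i, k) with hT1
  set T2 := ∑ i, ∑ k ∈ Finset.range (M+1),
    C (cf f (Sum.inl i) k) * (⇑S.D)^[k] (C (S.a i) - S.H i) with hT2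
  have hgoal : (∑ i, ∑ k ∈ Finset.range (M+1),
      C (cf f (Sum.inl i) k) * (⇑S.D)^[k] (S.F i)) = T1 - T2 := by
    rw [hT1, hT2, ← Finset.sum_sub_distrib]
    refine Finset.sum_congr rfl fun i _ => ?_
    rw [← Finset.sum_sub_distrib]
    refine Finset.sum_congr rfl fun k _ => ?_
    rw [hF, hrw, mul_add]
    ring
  rw [hgoal, hdec]
  linear_combination -hsub

end AuxSubst


section AuxD

variable {K : Type} [Field K] {n : ℕ}

theorem cf_sum {α : Type*} (s : Finset α) (F : α → R K n) (v : Fin n ⊕ Fin (n-1)) (k : ℕ) :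
    cf (∑ a ∈ s, F a) v k = ∑ a ∈ s, cf (F a) v k := by
  simp [cf, MvPolynomial.coeff_sum]

/-- The operator `∑ cf(f,v,k) ∂^k` attached to `f` and the indeterminate `v`. -/
noncomputable def opAt (f : R K n) (v : Fin n ⊕ Fin (n-1)) : Polynomial K :=
  ∑ k ∈ Finset.range (ordTot f + 1), Polynomial.monomial k (cf f v k)

theorem opOf_eq_opAt (S : Sys K n) (f : R K n) (i : Fin n) :
    S.opOf f i = opAt f (Sum.inl i) := rfl

theorem coeff_opAt (f : R K n) (v : Fin n ⊕ Fin (n-1)) (k : ℕ) :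
    (opAt f v).coeff k = cf f v k := by
  classical
  rw [opAt, Polynomial.finset_sum_coeff]
  simp only [Polynomial.coeff_monomial]
  rw [Finset.sum_ite_eq' (Finset.range (ordTot f + 1)) k (fun k' => cf f v k')]
  by_cases h : k ∈ Finset.range (ordTot f + 1)
  · rw [if_pos h]
  · rw [if_neg h]
    by_contra hc
    have := ord_le_ordTot (mem_vars_of_cf (fun h0 => hc h0.symm))
    simp only [Finset.mem_range] at h
    exact h (by omega)

/-- Left composition with `∂` in the Ore ring `K[∂]`. -/
noncomputable def dOp (der : Derivation ℤ K K) (Q : Polynomial K) : Polynomial K :=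
  Polynomial.X * Q + ∑ k ∈ Q.support, Polynomial.monomial k (der (Q.coeff k))

theorem coeff_dOp (der : Derivation ℤ K K) (Q : Polynomial K) (k : ℕ) :
    (dOp der Q).coeff k = der (Q.coeff k) + (if k = 0 then 0 else Q.coeff (k-1)) := by
  classical
  rw [dOp, Polynomial.coeff_add, add_comm]
  congr 1
  · rw [Polynomial.finset_sum_coeff]
    simp only [Polynomial.coeff_monomial]
    rw [Finset.sum_ite_eq' Q.support k (fun k' => der (Q.coeff k'))]
    by_cases h : k ∈ Q.support
    · rw [if_pos h]
    · rw [if_neg h, Polynomial.notMem_support_iff.1 h, map_zero]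
  · cases k with
    | zero => simp
    | succ m => simp [Polynomial.coeff_X_mul]

theorem dOp_iter_bound (der : Derivation ℤ K K) (Q : Polynomial K) {d : ℕ}
    (hd : ∀ l, d < l → Q.coeff l = 0) (m : ℕ) :
    ((dOp der)^[m] Q).coeff (d + m) = Q.coeff d ∧
      ∀ l, d + m < l → ((dOp der)^[m] Q).coeff l = 0 := by
  induction m with
  | zero => exact ⟨rfl, by simpa using hd⟩
  | succ m ih =>
    obtain ⟨h1, h2⟩ := ih
    constructor
    · have he : d + (m + 1) = (d + m) + 1 := rfl
      rw [Function.iterate_succ_apply', coeff_dOp, he, if_neg (Nat.succ_ne_zero _)]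
      rw [Nat.add_sub_cancel, h1, h2 _ (by omega), map_zero, zero_add]
    · intro l hl
      rw [Function.iterate_succ_apply', coeff_dOp]
      rw [h2 _ (by omega), map_zero, if_neg (by omega), h2 _ (by omega), zero_add]

theorem D_linear (S : Sys K n) {f : R K n} (hl : IsLinearPoly f) :
    S.D f = C (S.der (constantCoeff f)) + ∑ w ∈ f.vars,
      (C (S.der (cf f w.1 w.2)) * X w + C (cf f w.1 w.2) * X (w.1, w.2 + 1)) := by
  conv_lhs => rw [linear_decomp hl]
  rw [map_add, S.hD_C, map_sum]
  congr 1
  refine Finset.sum_congr rfl fun w _ => ?_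
  rw [S.D.leibniz, smul_eq_mul, smul_eq_mul, S.hD_C, D_X_pair]
  ring

theorem lin_D (S : Sys K n) {f : R K n} (hl : IsLinearPoly f) : IsLinearPoly (S.D f) := by
  rw [D_linear S hl]
  refine lin_add (lin_C _) (lin_sum _ _ fun w _ => lin_add ?_ ?_)
  · exact lin_C_mul _ (lin_X w)
  · exact lin_C_mul _ (lin_X _)

theorem cf_D (S : Sys K n) {f : R K n} (hl : IsLinearPoly f)
    (v : Fin n ⊕ Fin (n-1)) (k : ℕ) :
    cf (S.D f) v k = S.der (cf f v k) + (if k = 0 then 0 else cf f v (k-1)) := by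
  classical
  rw [D_linear S hl, cf_add, cf_C, zero_add, cf_sum]
  have hbody : ∀ w ∈ f.vars,
      cf (C (S.der (cf f w.1 w.2)) * X w + C (cf f w.1 w.2) * X (w.1, w.2 + 1)) v k =
        (if w = (v, k) then S.der (cf f w.1 w.2) else 0) +
        (if ((w.1, w.2 + 1) : Vr n) = (v, k) then cf f w.1 w.2 else 0) := by
    intro w _
    rw [cf_add, cf_C_mul, cf_C_mul, cf_X, cf_X]
    by_cases h1 : w = (v, k) <;>
      by_cases h2 : ((w.1, w.2 + 1) : Vr n) = (v, k) <;> simp [h1, h2]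
  rw [Finset.sum_congr rfl hbody, Finset.sum_add_distrib]
  congr 1
  · rw [Finset.sum_ite_eq' f.vars ((v, k) : Vr n) (fun w => S.der (cf f w.1 w.2))]
    by_cases h : ((v, k) : Vr n) ∈ f.vars
    · rw [if_pos h]
    · rw [if_neg h, cf_eq_zero_of_not_mem_vars h, map_zero]
  · cases k with
    | zero =>
      rw [if_pos rfl]
      refine Finset.sum_eq_zero fun w _ => if_neg ?_
      intro h
      have := congrArg Prod.snd h
      simp at this
    | succ m =>
      rw [if_neg (Nat.succ_ne_zero m), Nat.add_sub_cancel]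
      have hiff : ∀ w : Vr n, (((w.1, w.2 + 1) : Vr n) = (v, m + 1)) = (w = ((v, m) : Vr n)) := by
        intro w
        apply propext
        constructor
        · intro h
          have h1 := congrArg Prod.fst h
          have h2 := congrArg Prod.snd h
          simp only at h1 h2
          exact Prod.ext h1 (by omega)
        · rintro rfl
          rfl
      simp only [hiff]
      rw [Finset.sum_ite_eq' f.vars ((v, m) : Vr n) (fun w => cf f w.1 w.2)]
      by_cases h : ((v, m) : Vr n) ∈ f.vars
      · rw [if_pos h]
      · rw [if_neg h, cf_eq_zero_of_not_mem_vars h]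

theorem xOnly_D (S : Sys K n) {f : R K n} (hl : IsLinearPoly f) (hx : xOnly f) :
    xOnly (S.D f) := by
  rintro ⟨v, k⟩ hw
  have h := cf_ne_zero_of_mem_vars (lin_D S hl) hw
  rw [cf_D S hl] at h
  by_cases h1 : cf f v k = 0
  · rw [h1, map_zero, zero_add] at h
    by_cases h2 : k = 0
    · rw [if_pos h2] at h; exact absurd rfl h
    · rw [if_neg h2] at h
      have h' : cf f v (k - 1) ≠ 0 := h
      exact hx ((v, k - 1)) (mem_vars_of_cf h')
  · exact hx _ (mem_vars_of_cf h1)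

theorem lin_D_iter (S : Sys K n) {f : R K n} (hl : IsLinearPoly f) (j : ℕ) :
    IsLinearPoly ((⇑S.D)^[j] f) := by
  induction j with
  | zero => exact hl
  | succ j ih => rw [Function.iterate_succ_apply']; exact lin_D S ih

theorem xOnly_D_iter (S : Sys K n) {f : R K n} (hl : IsLinearPoly f) (hx : xOnly f) (j : ℕ) :
    xOnly ((⇑S.D)^[j] f) := by
  induction j with
  | zero => exact hx
  | succ j ih => rw [Function.iterate_succ_apply']; exact xOnly_D S (lin_D_iter S hl j) ih

theorem cf_D_iter (S : Sys K n) {f : R K n} (hl : IsLinearPoly f) (j : ℕ)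
    (v : Fin n ⊕ Fin (n-1)) (k : ℕ) :
    cf ((⇑S.D)^[j] f) v k = ((dOp S.der)^[j] (opAt f v)).coeff k := by
  induction j generalizing k with
  | zero => exact (coeff_opAt f v k).symm
  | succ j ih =>
    rw [Function.iterate_succ_apply', Function.iterate_succ_apply']
    rw [cf_D S (lin_D_iter S hl j), coeff_dOp, ih]
    cases k with
    | zero => rfl
    | succ m =>
      have h' : cf ((⇑S.D)^[j] f) v (m + 1 - 1) = ((dOp S.der)^[j] (opAt f v)).coeff (m + 1 - 1) :=
        ih _
      rw [h']

end AuxD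


section AuxOp

variable {K : Type} [Field K] {n : ℕ}

theorem cf_zero (v : Fin n ⊕ Fin (n-1)) (k : ℕ) : cf (0 : R K n) v k = 0 := by
  simp [cf]

theorem cf_smul (μ : K) (f : R K n) (v : Fin n ⊕ Fin (n-1)) (k : ℕ) :
    cf (μ • f) v k = μ * cf f v k := by
  rw [MvPolynomial.smul_eq_C_mul, cf_C_mul]

theorem dOp_iter_support (der : Derivation ℤ K K) (j : ℕ) (Q : Polynomial K) (k : ℕ)
    (h : ((dOp der)^[j] Q).coeff k ≠ 0) : ∃ k', Q.coeff k' ≠ 0 ∧ k ≤ k' + j := by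
  induction j generalizing k with
  | zero => exact ⟨k, h, le_refl _⟩
  | succ j ih =>
    rw [Function.iterate_succ_apply', coeff_dOp] at h
    by_cases h1 : ((dOp der)^[j] Q).coeff k ≠ 0
    · obtain ⟨k', hk1, hk2⟩ := ih _ h1
      exact ⟨k', hk1, by omega⟩
    · push_neg at h1
      rw [h1, map_zero, zero_add] at h
      by_cases h2 : k = 0
      · rw [if_pos h2] at h; exact absurd rfl h
      · rw [if_neg h2] at h
        obtain ⟨k', hk1, hk2⟩ := ih _ h
        exact ⟨k', hk1, by omega⟩

theorem applyOp_zero_left (S : Sys K n) (f : R K n) : S.applyOp 0 f = 0 := by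
  unfold Sys.applyOp; simp

theorem applyOp_zero_right (S : Sys K n) (L : Polynomial K) : S.applyOp L 0 = 0 := by
  unfold Sys.applyOp
  refine Finset.sum_eq_zero fun k _ => ?_
  rw [D_iter_zero, mul_zero]

theorem applyOp_monomial (S : Sys K n) (j : ℕ) (a : K) (f : R K n) :
    S.applyOp (Polynomial.monomial j a) f = a • (⇑S.D)^[j] f := by
  unfold Sys.applyOp
  by_cases h : a = 0
  · simp [h]
  · rw [Polynomial.support_monomial j h, Finset.sum_singleton, Polynomial.coeff_monomial,
      if_pos rfl, MvPolynomial.smul_eq_C_mul]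

theorem applyOp_eq_range (S : Sys K n) (L : Polynomial K) (f : R K n) (m : ℕ)
    (h : ∀ l, m ≤ l → L.coeff l = 0) :
    S.applyOp L f = ∑ k ∈ Finset.range m, C (L.coeff k) * (⇑S.D)^[k] f := by
  unfold Sys.applyOp
  refine Finset.sum_subset ?_ ?_
  · intro k hk
    rw [Finset.mem_range]
    by_contra hc
    exact Polynomial.mem_support_iff.1 hk (h k (by omega))
  · intro k _ hk
    rw [Polynomial.notMem_support_iff.1 hk, map_zero, zero_mul]

theorem applyOp_add (S : Sys K n) (P Q : Polynomial K) (f : R K n) :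
    S.applyOp (P + Q) f = S.applyOp P f + S.applyOp Q f := by
  set m := max (P.natDegree + 1) (Q.natDegree + 1) with hm
  have hP : ∀ l, m ≤ l → P.coeff l = 0 := fun l hl =>
    Polynomial.coeff_eq_zero_of_natDegree_lt (by omega)
  have hQ : ∀ l, m ≤ l → Q.coeff l = 0 := fun l hl =>
    Polynomial.coeff_eq_zero_of_natDegree_lt (by omega)
  have hPQ : ∀ l, m ≤ l → (P + Q).coeff l = 0 := fun l hl => by
    rw [Polynomial.coeff_add, hP l hl, hQ l hl, add_zero]
  rw [applyOp_eq_range S P f m hP, applyOp_eq_range S Q f m hQ,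
    applyOp_eq_range S (P + Q) f m hPQ, ← Finset.sum_add_distrib]
  refine Finset.sum_congr rfl fun k _ => ?_
  rw [Polynomial.coeff_add, map_add, add_mul]

theorem applyOp_sum (S : Sys K n) {α : Type*} (s : Finset α) (F : α → Polynomial K)
    (f : R K n) :
    S.applyOp (∑ x ∈ s, F x) f = ∑ x ∈ s, S.applyOp (F x) f := by
  induction s using Finset.cons_induction with
  | empty => simpa using applyOp_zero_left S f
  | cons x s hx ih => rw [Finset.sum_cons, Finset.sum_cons, applyOp_add, ih]

theorem applyOp_fin_sum (S : Sys K n) {m : ℕ} (μ : Fin m → K) (f : R K n) :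
    S.applyOp (∑ j : Fin m, Polynomial.monomial (j : ℕ) (μ j)) f
      = ∑ j : Fin m, μ j • (⇑S.D)^[(j : ℕ)] f := by
  rw [applyOp_sum]
  exact Finset.sum_congr rfl fun j _ => applyOp_monomial S _ _ f

theorem coeff_fin_sum_monomial {m : ℕ} (μ : Fin m → K) (k : ℕ) :
    (∑ j : Fin m, Polynomial.monomial (j : ℕ) (μ j)).coeff k =
      if h : k < m then μ ⟨k, h⟩ else 0 := by
  rw [Polynomial.finset_sum_coeff]
  simp only [Polynomial.coeff_monomial]
  by_cases h : k < m
  · rw [dif_pos h, Finset.sum_eq_single (⟨k, h⟩ : Fin m)]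
    · rw [if_pos rfl]
    · intro j _ hj
      refine if_neg fun he => hj (Fin.ext he)
    · intro habs
      exact absurd (Finset.mem_univ _) habs
  · rw [dif_neg h]
    refine Finset.sum_eq_zero fun j _ => if_neg fun he => ?_
    have := j.isLt
    omega

end AuxOp

/-- Let `A` be a nonzero linear `ID`-primitive differential polynomial
in `(G₀)` with `|G₀| = c(A) + 1`. Then for `j = 0,1,…,c(A)` there exist differential
operators `𝓓ⱼ ∈ K[∂]` with `deg 𝓓ⱼ = j` such that
`G₀ = {B₀ = 𝓓₀(A), B₁ = 𝓓₁(A), …, B_{c(A)} = 𝓓_{c(A)}(A)}`. -/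
theorem statement_8 {K : Type} [Field K] {n : ℕ} (S : Sys K n) (G : Finset (R K n))
    (hG : S.IsAssocGB G) (A : R K n) (hA0 : A ≠ 0) (hAlin : IsLinearPoly A)
    (hAx : xOnly A) (hAPS : S.PSIdealMem A) (hAprim : S.IDPrimitive A)
    (hcard : (G0 G).card = S.coOrd A + 1) :
    ∃ Dop : ℕ → Polynomial K, (∀ j ≤ S.coOrd A, (Dop j).natDegree = j) ∧
      ((G0 G : Finset (R K n)) : Set (R K n)) =
        {g | ∃ j ≤ S.coOrd A, g = S.applyOp (Dop j) A} := by
  classical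
  -- A is not constant
  have hAvars : A.vars.Nonempty := by
    rw [Finset.nonempty_iff_ne_empty]
    intro hemp
    have hop : ∀ i, S.opOf A i = 0 := by
      intro i
      rw [opOf_eq_opAt, opAt]
      refine Finset.sum_eq_zero fun k _ => ?_
      rw [cf_eq_zero_of_not_mem_vars (by rw [hemp]; exact Finset.notMem_empty _), map_zero]
    have hdvd : ∀ i, S.leftDvd Polynomial.X (S.opOf A i) := by
      intro i
      refine ⟨0, fun f => ?_⟩
      rw [hop i, applyOp_zero_left, applyOp_zero_right]
    have := hAprim Polynomial.X hdvd
    rw [Polynomial.natDegree_X] at this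
    exact one_ne_zero this
  obtain ⟨wlead, hwmem, hwmax⟩ := Finset.exists_max_image A.vars rkk hAvars
  obtain ⟨wv, κ⟩ := wlead
  obtain ⟨ι, rfl⟩ : ∃ i, wv = Sum.inl i := by
    have := hAx _ hwmem
    cases wv with
    | inl i => exact ⟨i, rfl⟩
    | inr j => simp at this
  set c := S.coOrd A with hcdef
  set a := cf A (Sum.inl ι) κ with hadef
  have ha0 : a ≠ 0 := cf_ne_zero_of_mem_vars hAlin hwmem
  have hPtop : ∀ (i : Fin n) (l : ℕ), κ < l → (opAt A (Sum.inl i)).coeff l = 0 := by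
    intro i l hl
    rw [coeff_opAt]
    by_contra hc0
    have := rkk_le_inl_iff.1 (hwmax _ (mem_vars_of_cf hc0))
    rcases this with h | ⟨h, -⟩ <;> omega
  have htop : ∀ j : ℕ, cf ((⇑S.D)^[j] A) (Sum.inl ι) (κ + j) = a := by
    intro j
    rw [cf_D_iter S hAlin, (dOp_iter_bound S.der _ (hPtop ι) j).1, coeff_opAt]
  have hvan : ∀ (j : ℕ) (i : Fin n) (l : ℕ), κ + j < l →
      cf ((⇑S.D)^[j] A) (Sum.inl i) l = 0 := by
    intro j i l hl
    rw [cf_D_iter S hAlin]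
    exact (dOp_iter_bound S.der _ (hPtop i) j).2 l hl
  -- the co-order is attained
  have hCSet0 : S.PSIdealMem ((⇑S.D)^[0] A) := by
    rw [Function.iterate_zero_apply]; exact hAPS
  have hbdd : BddAbove {m : ℕ | S.PSIdealMem ((⇑S.D)^[m] A)} := by
    refine ⟨S.Nn - S.o ι - S.gamT, fun m hm => ?_⟩
    have hmem : ((Sum.inl ι : Fin n ⊕ Fin (n-1)), κ + m) ∈ ((⇑S.D)^[m] A).vars :=
      mem_vars_of_cf (by rw [htop m]; exact ha0)
    have h2 := hm.2 _ hmem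
    simp only [Sum.elim_inl] at h2
    omega
  have hcmem : S.PSIdealMem ((⇑S.D)^[c] A) :=
    Nat.sSup_mem (s := {m : ℕ | S.PSIdealMem ((⇑S.D)^[m] A)}) ⟨0, hCSet0⟩ hbdd
  have hdeg : ∀ (i : Fin n) (k : ℕ), (opAt A (Sum.inl i)).coeff k ≠ 0 →
      k + c ≤ S.Nn - S.o i - S.gamT := by
    intro i k hk
    have hQ0 : opAt A (Sum.inl i) ≠ 0 := fun h => hk (by rw [h]; simp)
    have hd := Polynomial.le_natDegree_of_ne_zero hk
    have htopQ : ∀ l, (opAt A (Sum.inl i)).natDegree < l → (opAt A (Sum.inl i)).coeff l = 0 :=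
      fun l hl => Polynomial.coeff_eq_zero_of_natDegree_lt hl
    have hcf : cf ((⇑S.D)^[c] A) (Sum.inl i) ((opAt A (Sum.inl i)).natDegree + c) ≠ 0 := by
      rw [cf_D_iter S hAlin, (dOp_iter_bound S.der _ htopQ c).1]
      exact Polynomial.leadingCoeff_ne_zero.2 hQ0
    have h2 := hcmem.2 _ (mem_vars_of_cf hcf)
    simp only [Sum.elim_inl] at h2
    omega
  -- D^j A belongs to (PS) for all j ≤ c
  have hDjA : ∀ j : ℕ, j ≤ c → ((⇑S.D)^[j] A) ∈ Ideal.span S.PSset ∧ S.inXV ((⇑S.D)^[j] A) := by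
    intro j hj
    have hsubst : S.subst ((⇑S.D)^[j] A) = 0 := by
      rw [subst_D_iter, subst_span S hAPS.1, D_iter_zero]
    have hcfb : ∀ (i : Fin n) (k : ℕ), cf ((⇑S.D)^[j] A) (Sum.inl i) k ≠ 0 →
        k ≤ S.Nn - S.o i - S.gamT := by
      intro i k hk
      rw [cf_D_iter S hAlin] at hk
      obtain ⟨k', hk1, hk2⟩ := dOp_iter_support S.der j _ k hk
      have := hdeg i k' hk1
      omega
    constructor
    · rw [key_ident S (lin_D_iter S hAlin j) (xOnly_D_iter S hAlin hAx j) hsubst (le_refl _)]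
      refine Ideal.sum_mem _ fun i _ => Ideal.sum_mem _ fun k _ => ?_
      by_cases h0 : cf ((⇑S.D)^[j] A) (Sum.inl i) k = 0
      · rw [h0, map_zero, zero_mul]; exact Ideal.zero_mem _
      · exact Ideal.mul_mem_left _ _ (Ideal.subset_span ⟨i, k, hcfb i k h0, rfl⟩)
    · rintro ⟨wv, wk⟩ hw
      have hleft := xOnly_D_iter S hAlin hAx j _ hw
      obtain ⟨i, rfl⟩ : ∃ i, wv = Sum.inl i := by
        cases wv with
        | inl i => exact ⟨i, rfl⟩
        | inr j0 => simp at hleft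
      simp only [Sum.elim_inl]
      exact hcfb i wk (cf_ne_zero_of_mem_vars (lin_D_iter S hAlin j) hw)
  have hspan : ∀ j : ℕ, j ≤ c →
      ((⇑S.D)^[j] A) ∈ Submodule.span K ((G0 G : Finset (R K n)) : Set (R K n)) := by
    intro j hj
    exact span_G0 S hG (((⇑S.D)^[j] A).vars.sup eM + 1) _ (Nat.lt_succ_self _)
      (hDjA j hj).1 (hDjA j hj).2 (lin_D_iter S hAlin j) (xOnly_D_iter S hAlin hAx j)
  -- evaluation of x-coefficients of K-combinations of the D^j A
  have hval : ∀ (μ : Fin (c+1) → K) (g : R K n),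
      (∑ j : Fin (c+1), μ j • (⇑S.D)^[(j : ℕ)] A) = g → ∀ m : Fin (c+1),
      (∀ j : Fin (c+1), (m : ℕ) < (j : ℕ) → μ j = 0) →
      cf g (Sum.inl ι) (κ + (m : ℕ)) = μ m * a := by
    intro μ g hg m hm
    rw [← hg, cf_sum]
    have hsingle : (∑ j : Fin (c+1),
        cf (μ j • (⇑S.D)^[(j : ℕ)] A) (Sum.inl ι) (κ + (m : ℕ))) =
        cf (μ m • (⇑S.D)^[(m : ℕ)] A) (Sum.inl ι) (κ + (m : ℕ)) := by
      refine Finset.sum_eq_single m (fun j _ hj => ?_)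
        (fun h => absurd (Finset.mem_univ m) h)
      rcases Nat.lt_or_ge (j : ℕ) (m : ℕ) with h1 | h2
      · rw [cf_smul, hvan (j : ℕ) ι (κ + (m : ℕ)) (by omega), mul_zero]
      · have hlt : (m : ℕ) < (j : ℕ) := by
          rcases Nat.lt_or_ge (m : ℕ) (j : ℕ) with h3 | h4
          · exact h3
          · exact absurd (Fin.ext (by omega) : j = m) hj
        rw [hm j hlt, zero_smul, cf_zero]
    rw [hsingle, cf_smul, htop]
  -- linear independence of the D^j A
  have hindep : LinearIndependent K (fun j : Fin (c+1) => (⇑S.D)^[(j : ℕ)] A) := by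
    rw [Fintype.linearIndependent_iff]
    intro μ hμ
    have hstep : ∀ t : ℕ, ∀ j : Fin (c+1), c - t ≤ (j : ℕ) → μ j = 0 := by
      intro t
      induction t with
      | zero =>
        intro j hj
        have hjc : (j : ℕ) = c := by have := j.isLt; omega
        have hv := hval μ 0 hμ j (fun j' hj' => absurd hj' (by have := j'.isLt; omega))
        rw [cf_zero] at hv
        rcases mul_eq_zero.1 hv.symm with h | h
        · exact h
        · exact absurd h ha0
      | succ t ih =>
        intro j hj
        rcases Nat.lt_or_ge (j : ℕ) (c - t) with h1 | h2
        · have hv := hval μ 0 hμ j (fun j' hj' => ih j' (by omega))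
          rw [cf_zero] at hv
          rcases mul_eq_zero.1 hv.symm with h | h
          · exact h
          · exact absurd h ha0
        · exact ih j h2
    exact fun j => hstep c j (by omega)
  -- the two spans coincide
  set V1 := Submodule.span K (Set.range (fun j : Fin (c+1) => (⇑S.D)^[(j : ℕ)] A)) with hV1
  set V2 := Submodule.span K ((G0 G : Finset (R K n)) : Set (R K n)) with hV2
  have hle : V1 ≤ V2 := by
    rw [hV1, Submodule.span_le]
    rintro x ⟨j, rfl⟩
    exact hspan (j : ℕ) (by have := j.isLt; omega)
  haveI : FiniteDimensional K V2 := by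
    rw [hV2]
    exact FiniteDimensional.span_of_finite K (Finset.finite_toSet _)
  have hr1 : Module.finrank K V1 = c + 1 := by
    rw [hV1, finrank_span_eq_card hindep, Fintype.card_fin]
  have hr2 : Module.finrank K V2 ≤ c + 1 := by
    have h2 := finrank_span_finset_le_card (R := K) (G0 G)
    rw [hcard] at h2
    exact h2
  have hV21 : V1 = V2 := Submodule.eq_of_le_of_finrank_le hle (by omega)
  -- every element of G0 is an operator applied to A
  have hmain : ∀ g, g ∈ G0 G → ∃ L : Polynomial K,
      S.applyOp L A = g ∧ L.natDegree ≤ c ∧ IsLead g (Sum.inl ι, κ + L.natDegree) := by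
    intro g hgmem
    have hgG : g ∈ G := ((@Finset.mem_filter _ _ (Classical.decPred _) _ _).1 hgmem).1
    have hgprop := hG.1 g hgG
    have hgV2 : g ∈ V2 := by
      rw [hV2]
      exact Submodule.subset_span (Finset.mem_coe.2 hgmem)
    have hgV1 : g ∈ V1 := by rw [hV21]; exact hgV2
    rw [hV1] at hgV1
    obtain ⟨μ, hμ⟩ := (Submodule.mem_span_range_iff_exists_fun K).1 hgV1
    have hsne : (Finset.univ.filter (fun j : Fin (c+1) => μ j ≠ 0)).Nonempty := by
      rw [Finset.nonempty_iff_ne_empty]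
      intro hemp
      have hz : ∀ j, μ j = 0 := by
        intro j
        by_contra h0
        have hmem2 : j ∈ Finset.univ.filter (fun j : Fin (c+1) => μ j ≠ 0) :=
          Finset.mem_filter.2 ⟨Finset.mem_univ _, h0⟩
        rw [hemp] at hmem2
        exact absurd hmem2 (Finset.notMem_empty j)
      have : g = 0 := by
        rw [← hμ]
        exact Finset.sum_eq_zero fun j _ => by rw [hz j, zero_smul]
      exact hgprop.1 this
    set jm := (Finset.univ.filter (fun j : Fin (c+1) => μ j ≠ 0)).max' hsne with hjmdef
    have hjmem : jm ∈ Finset.univ.filter (fun j : Fin (c+1) => μ j ≠ 0) :=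
      Finset.max'_mem _ _
    have hμjm : μ jm ≠ 0 := (Finset.mem_filter.1 hjmem).2
    have hmax : ∀ j : Fin (c+1), (jm : ℕ) < (j : ℕ) → μ j = 0 := by
      intro j hj
      by_contra h0
      have hmem2 : j ∈ Finset.univ.filter (fun j : Fin (c+1) => μ j ≠ 0) :=
        Finset.mem_filter.2 ⟨Finset.mem_univ _, h0⟩
      have hle2 : (j : ℕ) ≤ (jm : ℕ) := Finset.le_max' _ j hmem2
      omega
    set L := ∑ j : Fin (c+1), Polynomial.monomial (j : ℕ) (μ j) with hL
    have hLg : S.applyOp L A = g := by rw [hL, applyOp_fin_sum]; exact hμ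
    have hcf_g : cf g (Sum.inl ι) (κ + (jm : ℕ)) = μ jm * a := hval μ g hμ jm hmax
    have hLdeg : L.natDegree = (jm : ℕ) := by
      apply le_antisymm
      · rw [Polynomial.natDegree_le_iff_coeff_eq_zero]
        intro k hk
        rw [hL, coeff_fin_sum_monomial]
        by_cases h : k < c + 1
        · rw [dif_pos h]
          exact hmax ⟨k, h⟩ hk
        · rw [dif_neg h]
      · apply Polynomial.le_natDegree_of_ne_zero
        rw [hL, coeff_fin_sum_monomial, dif_pos jm.isLt]
        simpa using hμjm
    have hlead : IsLead g (Sum.inl ι, κ + (jm : ℕ)) := by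
      constructor
      · exact mem_vars_of_cf (by rw [hcf_g]; exact mul_ne_zero hμjm ha0)
      · rintro ⟨wv, wk⟩ hw
        have hcfw := cf_ne_zero_of_mem_vars hgprop.2.1 hw
        have hex : ∃ j : Fin (c+1), (j : ℕ) ≤ (jm : ℕ) ∧
            cf ((⇑S.D)^[(j : ℕ)] A) wv wk ≠ 0 := by
          by_contra hno
          push_neg at hno
          apply hcfw
          rw [← hμ, cf_sum]
          refine Finset.sum_eq_zero fun j _ => ?_
          rw [cf_smul]
          rcases Nat.lt_or_ge (jm : ℕ) (j : ℕ) with h1 | h2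
          · rw [hmax j h1, zero_mul]
          · rw [hno j h2, mul_zero]
        obtain ⟨j, hjle, hjcf⟩ := hex
        have hwmem' := mem_vars_of_cf hjcf
        obtain ⟨iw, rfl⟩ : ∃ iw, wv = Sum.inl iw := by
          have hL2 := xOnly_D_iter S hAlin hAx (j : ℕ) _ hwmem'
          cases wv with
          | inl i0 => exact ⟨i0, rfl⟩
          | inr j0 => simp at hL2
        have h1 : rkk (n := n) (Sum.inl iw, wk) ≤ rkk (Sum.inl ι, κ + (j : ℕ)) := by
          have hcf2 := hjcf
          rw [cf_D_iter S hAlin] at hcf2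
          obtain ⟨k', hk1, hk2⟩ := dOp_iter_support S.der _ _ _ hcf2
          have hk1' : cf A (Sum.inl iw) k' ≠ 0 := by rwa [coeff_opAt] at hk1
          have hrk := rkk_le_inl_iff.1 (hwmax _ (mem_vars_of_cf hk1'))
          rw [rkk_le_inl_iff]
          rcases hrk with hh | ⟨hh1, hh2⟩
          · exact Or.inl (by omega)
          · rcases Nat.lt_or_ge wk (κ + (j : ℕ)) with hlt | hge
            · exact Or.inl hlt
            · exact Or.inr ⟨by omega, hh2⟩
        have h2 : rkk (n := n) (Sum.inl ι, κ + (j : ℕ)) ≤ rkk (Sum.inl ι, κ + (jm : ℕ)) := by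
          rw [rkk_le_inl_iff]
          rcases Nat.lt_or_ge (κ + (j : ℕ)) (κ + (jm : ℕ)) with h | h
          · exact Or.inl h
          · exact Or.inr ⟨by omega, le_refl _⟩
        exact le_trans h1 h2
    refine ⟨L, hLg, by rw [hLdeg]; have := jm.isLt; omega, by rw [hLdeg]; exact hlead⟩
  have hmain' : ∀ g : R K n, ∃ L : Polynomial K, g ∈ G0 G →
      (S.applyOp L A = g ∧ L.natDegree ≤ c ∧ IsLead g (Sum.inl ι, κ + L.natDegree)) := by
    intro g
    by_cases h : g ∈ G0 G
    · obtain ⟨L, hL⟩ := hmain g h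
      exact ⟨L, fun _ => hL⟩
    · exact ⟨0, fun hh => absurd hh h⟩
  choose Lf hLf using hmain'
  have hinj : ∀ g ∈ G0 G, ∀ g' ∈ G0 G, (Lf g).natDegree = (Lf g').natDegree → g = g' := by
    intro g hg g' hg' hd
    by_contra hne
    obtain ⟨hg1, hg2, hg3⟩ := hLf g hg
    obtain ⟨hg1', hg2', hg3'⟩ := hLf g' hg'
    have hgG : g ∈ G := ((@Finset.mem_filter _ _ (Classical.decPred _) _ _).1 hg).1
    have hgG' : g' ∈ G := ((@Finset.mem_filter _ _ (Classical.decPred _) _ _).1 hg').1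
    obtain ⟨v₃, hl₃, hmon₃, hexcl₃⟩ := hG.2.2.1 g hgG
    have hv₃ : v₃ = (Sum.inl ι, κ + (Lf g).natDegree) := isLead_unique hl₃ hg3
    have hmem3 : v₃ ∈ g'.vars := by rw [hv₃, hd]; exact hg3'.1
    exact absurd hmem3 (hexcl₃ g' hgG' (fun he => hne he.symm))
  have himg : (G0 G).image (fun g => (Lf g).natDegree) = Finset.range (c+1) := by
    apply Finset.eq_of_subset_of_card_le
    · intro x hx
      obtain ⟨g, hg, rfl⟩ := Finset.mem_image.1 hx
      rw [Finset.mem_range]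
      have := (hLf g hg).2.1
      omega
    · rw [Finset.card_range,
        Finset.card_image_of_injOn (fun g hg g' hg' h => hinj g hg g' hg' h), hcard]
  have hsurj : ∀ j : ℕ, j ≤ c → ∃ g, g ∈ G0 G ∧ (Lf g).natDegree = j := by
    intro j hj
    have hmem2 : j ∈ (G0 G).image (fun g => (Lf g).natDegree) := by
      rw [himg, Finset.mem_range]; omega
    obtain ⟨g, hg, he⟩ := Finset.mem_image.1 hmem2
    exact ⟨g, hg, he⟩
  refine ⟨fun j => if h : j ≤ c then Lf (hsurj j h).choose else 0, ?_, ?_⟩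
  · intro j hj
    simp only [dif_pos hj]
    exact (hsurj j hj).choose_spec.2
  · ext g
    simp only [Finset.mem_coe, Set.mem_setOf_eq]
    constructor
    · intro hg
      refine ⟨(Lf g).natDegree, (hLf g hg).2.1, ?_⟩
      simp only [dif_pos (hLf g hg).2.1]
      obtain ⟨hg'mem, hg'deg⟩ := (hsurj _ (hLf g hg).2.1).choose_spec
      have heq : (hsurj _ (hLf g hg).2.1).choose = g := hinj _ hg'mem g hg (by rw [hg'deg])
      rw [heq, (hLf g hg).1]
    · rintro ⟨j, hj, rfl⟩
      simp only [dif_pos hj]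
      obtain ⟨hmem, hdeg⟩ := (hsurj j hj).choose_spec
      rw [(hLf _ hmem).1]
      exact hmem

end DPPE
end
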